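/- arXiv:2511.11365 — 10 statements merged into one kernel-verified Lean document; each statement's English description precedes it below -/
import Mathlib

section
/- A strict preference order (vote) v over a candidate set C partitioned into parties P_1, ..., P_m is party-aligned single-peaked with party axis P_1 < P_2 < ... < P_m if and only if the following three conditions hold, where for each party P_i we let h_i and l_i denote v's most- and least-preferred candidate within P_i, and P_j is the party containing v's top-ranked candidate: (a) if j is neither 1 nor m, then v prefers l_j to h_{j-1} or v prefers l_j to h_{j+1}; (b) for each i with j < i < m, v prefers l_i to h_{i+1}; (c) for each i with 1 < i < j, v prefers l_i to h_{i-1}. -/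
/-- The vote `succ` is single-peaked with respect to the axis `lt`:
for all `a ◁ b ◁ c`, if `a ≻ b` then `b ≻ c`. -/
def SinglePeakedWith {C : Type*} (succ lt : C → C → Prop) : Prop :=
  ∀ a b c : C, lt a b → lt b c → succ a b → succ b c

/-- Party-aligned single-peakedness of a single vote, where parties are indexed by
naturals and the party axis is the natural order of the indices: there is a
perceived candidate axis, compatible with the party axis, with respect to which
the vote is single-peaked. -/
def PASPVote {C : Type*} (party : C → ℕ) (succ : C → C → Prop) : Prop :=
  ∃ lt : C → C → Prop, IsStrictTotalOrder C lt ∧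
    (∀ c c' : C, lt c c' → party c ≤ party c') ∧
    SinglePeakedWith succ lt

open Classical in
/-- Side of candidate `c`: `1` for the top candidate, `0` for left of the peak,
`2` for right of the peak. -/
noncomputable def pasp_s {C : Type*} (party : C → ℕ) (j : ℕ) (flag : Prop) (top : C) (c : C) : ℕ :=
  if c = top then 1 else if party c < j ∨ (party c = j ∧ flag) then 0 else 2

open Classical in
/-- Rank of `c` in the vote: number of candidates strictly preferred to `c`. -/
noncomputable def pasp_rk {C : Type*} [Fintype C] (succ : C → C → Prop) (c : C) : ℕ :=
  (Finset.univ.filter (fun d => succ d c)).card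

open Classical in
/-- Position within the side. -/
noncomputable def pasp_t {C : Type*} [Fintype C] (party : C → ℕ) (j : ℕ) (flag : Prop) (top : C)
    (succ : C → C → Prop) (c : C) : ℕ :=
  if pasp_s party j flag top c = 0 then Fintype.card C - pasp_rk succ c else pasp_rk succ c

/-- The constructed axis. -/
noncomputable def pasp_lt {C : Type*} [Fintype C] (party : C → ℕ) (j : ℕ) (flag : Prop) (top : C)
    (succ : C → C → Prop) (c c' : C) : Prop :=
  party c < party c' ∨ (party c = party c' ∧
    (pasp_s party j flag top c < pasp_s party j flag top c' ∨
      (pasp_s party j flag top c = pasp_s party j flag top c' ∧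
        pasp_t party j flag top succ c < pasp_t party j flag top succ c')))

lemma pasp_s_spec {C : Type*} (party : C → ℕ) (j : ℕ) (flag : Prop) (top : C) (c : C) :
    (c = top ∧ pasp_s party j flag top c = 1) ∨
    (c ≠ top ∧ (party c < j ∨ (party c = j ∧ flag)) ∧ pasp_s party j flag top c = 0) ∨
    (c ≠ top ∧ ¬(party c < j ∨ (party c = j ∧ flag)) ∧ pasp_s party j flag top c = 2) := by
  unfold pasp_s
  split_ifs with h1 h2
  · exact Or.inl ⟨h1, rfl⟩
  · exact Or.inr (Or.inl ⟨h1, h2, rfl⟩)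
  · exact Or.inr (Or.inr ⟨h1, h2, rfl⟩)

/-- Lemma 1 (characterization of party-aligned single-peakedness of a single vote
under a fixed party axis `P_1 < … < P_m`).  Here `h i` and `l i` are the most-
and least-preferred candidates of party `P_i`, `top` is the top candidate of the
vote and `j` its party. -/
theorem vote_party_single_peaked_characterization
    {C : Type*} [Fintype C] {m : ℕ} (hm : 1 ≤ m)
    (party : C → ℕ) (hpr : ∀ c : C, party c ∈ Finset.Icc 1 m)
    (succ : C → C → Prop) (hsto : IsStrictTotalOrder C succ)
    (h l : ℕ → C)
    (hh : ∀ i ∈ Finset.Icc 1 m,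
      party (h i) = i ∧ ∀ c : C, party c = i → c ≠ h i → succ (h i) c)
    (hl : ∀ i ∈ Finset.Icc 1 m,
      party (l i) = i ∧ ∀ c : C, party c = i → c ≠ l i → succ c (l i))
    (top : C) (htop : ∀ c : C, c ≠ top → succ top c)
    (j : ℕ) (hj : party top = j) :
    PASPVote party succ ↔
      ((1 < j → j < m → succ (l j) (h (j - 1)) ∨ succ (l j) (h (j + 1))) ∧
       (∀ i : ℕ, j < i → i < m → succ (l i) (h (i + 1))) ∧
       (∀ i : ℕ, 1 < i → i < j → succ (l i) (h (i - 1)))) := by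
  classical
  have str : ∀ {a b c : C}, succ a b → succ b c → succ a c :=
    fun h1 h2 => hsto.trans _ _ _ h1 h2
  have asym : ∀ a b : C, succ a b → ¬ succ b a :=
    fun a b h1 h2 => hsto.irrefl a (str h1 h2)
  have tri : ∀ a b : C, a ≠ b → succ a b ∨ succ b a := by
    intro a b hne
    rcases (show succ a b ∨ a = b ∨ succ b a by
      by_contra hc; push_neg at hc; exact hc.2.1 (hsto.trichotomous a b hc.1 hc.2.2)) with h1 | h1 | h1
    · exact Or.inl h1
    · exact absurd h1 hne
    · exact Or.inr h1
  have hp1 : ∀ c : C, 1 ≤ party c := fun c => (Finset.mem_Icc.mp (hpr c)).1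
  have hp2 : ∀ c : C, party c ≤ m := fun c => (Finset.mem_Icc.mp (hpr c)).2
  have hj1 : 1 ≤ j := hj ▸ hp1 top
  have hj2 : j ≤ m := hj ▸ hp2 top
  have hhp : ∀ i, 1 ≤ i → i ≤ m → party (h i) = i :=
    fun i a b => (hh i (Finset.mem_Icc.mpr ⟨a, b⟩)).1
  have hlp : ∀ i, 1 ≤ i → i ≤ m → party (l i) = i :=
    fun i a b => (hl i (Finset.mem_Icc.mpr ⟨a, b⟩)).1
  have hhb : ∀ i, 1 ≤ i → i ≤ m → ∀ c : C, party c = i → c = h i ∨ succ (h i) c := by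
    intro i a b c hcp
    by_cases hc : c = h i
    · exact Or.inl hc
    · exact Or.inr ((hh i (Finset.mem_Icc.mpr ⟨a, b⟩)).2 c hcp hc)
  have hlw : ∀ i, 1 ≤ i → i ≤ m → ∀ c : C, party c = i → c = l i ∨ succ c (l i) := by
    intro i a b c hcp
    by_cases hc : c = l i
    · exact Or.inl hc
    · exact Or.inr ((hl i (Finset.mem_Icc.mpr ⟨a, b⟩)).2 c hcp hc)
  have chain : ∀ {x y z : C}, (x = y ∨ succ x y) → succ y z → succ x z := by
    rintro x y z (rfl | h1) h2
    · exact h2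
    · exact str h1 h2
  have chain2 : ∀ {x y z : C}, succ x y → (z = y ∨ succ y z) → succ x z := by
    rintro x y z h1 (rfl | h2)
    · exact h1
    · exact str h1 h2
  constructor
  · -- forward direction
    rintro ⟨lt, hlt, hcompat, hsp⟩
    have ltne : ∀ a b : C, lt a b → a ≠ b := by
      intro a b h1 h2
      subst h2
      exact hlt.irrefl a h1
    have lttot : ∀ a b : C, a ≠ b → lt a b ∨ lt b a := by
      intro a b hne
      rcases (show lt a b ∨ a = b ∨ lt b a by
        by_contra hc; push_neg at hc; exact hc.2.1 (hlt.trichotomous a b hc.1 hc.2.2)) with h1 | h1 | h1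
      · exact Or.inl h1
      · exact absurd h1 hne
      · exact Or.inr h1
    have ltparty : ∀ a b : C, party a < party b → lt a b := by
      intro a b hpab
      have hne : a ≠ b := by intro he; rw [he] at hpab; omega
      rcases lttot a b hne with h1 | h1
      · exact h1
      · exact absurd (hcompat b a h1) (by omega)
    have M2 : ∀ a b : C, lt a b → lt top a → succ a b := by
      intro a b h1 h2
      exact hsp top a b h2 h1 (htop a (Ne.symm (ltne top a h2)))
    have M1 : ∀ a b : C, lt a b → lt b top → succ b a := by
      intro a b h1 h2
      by_contra hcon
      rcases tri a b (ltne a b h1) with hab | hab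
      · exact asym top b (htop b (ltne b top h2)) (hsp a b top h1 h2 hab)
      · exact hcon hab
    refine ⟨?_, ?_, ?_⟩
    · intro h1j hjm
      by_cases hlj : l j = top
      · left
        rw [hlj]
        apply htop
        intro he
        have := hhp (j - 1) (by omega) (by omega)
        rw [he, hj] at this
        omega
      · rcases lttot (l j) top hlj with hcase | hcase
        · left
          refine M1 (h (j - 1)) (l j) (ltparty _ _ ?_) hcase
          rw [hhp (j - 1) (by omega) (by omega), hlp j (by omega) (by omega)]
          omega
        · right
          refine M2 (l j) (h (j + 1)) (ltparty _ _ ?_) hcase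
          rw [hhp (j + 1) (by omega) (by omega), hlp j (by omega) (by omega)]
          omega
    · intro i hji him
      refine M2 (l i) (h (i + 1)) (ltparty _ _ ?_) (ltparty top (l i) ?_)
      · rw [hhp (i + 1) (by omega) (by omega), hlp i (by omega) (by omega)]
        omega
      · rw [hj, hlp i (by omega) (by omega)]
        omega
    · intro i h1i hij
      refine M1 (h (i - 1)) (l i) (ltparty _ _ ?_) (ltparty (l i) top ?_)
      · rw [hhp (i - 1) (by omega) (by omega), hlp i (by omega) (by omega)]
        omega
      · rw [hj, hlp i (by omega) (by omega)]
        omega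
  · -- backward direction: construct the axis
    rintro ⟨condA, condB, condC⟩
    set F : Prop := (j = 1 ∨ (j < m ∧ succ (l j) (h (j - 1)))) with hF
    set N : ℕ := Fintype.card C with hN
    -- rank facts
    have rkN : ∀ c : C, pasp_rk succ c ≤ N := by
      intro c
      unfold pasp_rk
      rw [hN, ← Finset.card_univ]
      exact Finset.card_filter_le _ _
    have rkmono : ∀ a b : C, succ a b → pasp_rk succ a < pasp_rk succ b := by
      intro a b hab
      unfold pasp_rk
      apply Finset.card_lt_card
      have hsub : (Finset.univ.filter (fun d => succ d a)) ⊆ (Finset.univ.filter (fun d => succ d b)) := by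
        intro d hd
        simp only [Finset.mem_filter, Finset.mem_univ, true_and] at hd ⊢
        exact str hd hab
      refine (Finset.ssubset_iff_of_subset hsub).mpr ⟨a, ?_, ?_⟩
      · simp only [Finset.mem_filter, Finset.mem_univ, true_and]
        exact hab
      · simp only [Finset.mem_filter, Finset.mem_univ, true_and]
        exact hsto.irrefl a
    have rkinj : ∀ a b : C, pasp_rk succ a = pasp_rk succ b → a = b := by
      intro a b he
      by_contra hne
      rcases tri a b hne with h1 | h1
      · exact absurd he (Nat.ne_of_lt (rkmono a b h1))
      · exact absurd he.symm (Nat.ne_of_lt (rkmono b a h1))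
    -- abbreviations
    set s : C → ℕ := pasp_s party j F top with hs
    set t : C → ℕ := pasp_t party j F top succ with ht
    have s_top : s top = 1 := by
      rw [hs]; unfold pasp_s; rw [if_pos rfl]
    have s_spec := fun c => pasp_s_spec party j F top c
    have s_le2 : ∀ c : C, s c ≤ 2 := by
      intro c
      rcases s_spec c with ⟨_, h1⟩ | ⟨_, _, h1⟩ | ⟨_, _, h1⟩ <;> rw [hs] at * <;> omega
    have t0 : ∀ c : C, s c = 0 → t c = N - pasp_rk succ c := by
      intro c hc
      rw [ht]; unfold pasp_t
      rw [hs] at hc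
      rw [if_pos hc, hN]
    have tne : ∀ c : C, s c ≠ 0 → t c = pasp_rk succ c := by
      intro c hc
      rw [ht]; unfold pasp_t
      rw [hs] at hc
      rw [if_neg hc]
    -- chain lemmas on the right of the peak
    have Rstep : ∀ i, j ≤ i → i < m → (i = j → ¬ F) → succ (l i) (h (i + 1)) := by
      intro i hji him hif
      rcases Nat.lt_or_ge j i with h1 | h1
      · exact condB i h1 him
      · have hij : i = j := by omega
        rw [hij]
        have hnf := hif hij
        rw [hF] at hnf
        push_neg at hnf
        have hj1' : 1 < j := by omega
        have him' : j < m := by omega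
        rcases condA hj1' him' with h2 | h2
        · exact absurd h2 (hnf.2 him')
        · exact h2
    have Rchain : ∀ d : ℕ, ∀ i, j ≤ i → (i = j → ¬ F) → i + d + 1 ≤ m → succ (l i) (h (i + d + 1)) := by
      intro d
      induction d with
      | zero =>
        intro i hji hif hle
        exact Rstep i hji (by omega) hif
      | succ d IH =>
        intro i hji hif hle
        have e1 : succ (l i) (h (i + 1)) := Rstep i hji (by omega) hif
        have e2 : h (i + 1) = l (i + 1) ∨ succ (h (i + 1)) (l (i + 1)) :=
          hlw (i + 1) (by omega) (by omega) _ (hhp (i + 1) (by omega) (by omega))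
        have e3 : succ (l (i + 1)) (h (i + 1 + d + 1)) :=
          IH (i + 1) (by omega) (by omega) (by omega)
        have harith : i + 1 + d + 1 = i + (d + 1) + 1 := by omega
        rw [harith] at e3
        exact str e1 (chain e2 e3)
    -- chain lemmas on the left of the peak
    have Lstep : ∀ i, i ≤ j → 1 < i → (i = j → F) → succ (l i) (h (i - 1)) := by
      intro i hij h1i hif
      rcases Nat.lt_or_ge i j with h1 | h1
      · exact condC i h1i h1
      · have hij' : i = j := by omega
        rw [hij']
        rcases hif hij' with h2 | h2
        · exact absurd h2 (by omega)
        · exact h2.2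
    have Lchain : ∀ d : ℕ, ∀ i, i ≤ j → (i = j → F) → d + 1 < i → succ (l i) (h (i - d - 1)) := by
      intro d
      induction d with
      | zero =>
        intro i hij hif hlt'
        exact Lstep i hij (by omega) hif
      | succ d IH =>
        intro i hij hif hlt'
        have e1 : succ (l i) (h (i - 1)) := Lstep i hij (by omega) hif
        have e2 : h (i - 1) = l (i - 1) ∨ succ (h (i - 1)) (l (i - 1)) :=
          hlw (i - 1) (by omega) (by omega) _ (hhp (i - 1) (by omega) (by omega))
        have e3 : succ (l (i - 1)) (h (i - 1 - d - 1)) :=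
          IH (i - 1) (by omega) (by omega) (by omega)
        have harith : i - 1 - d - 1 = i - (d + 1) - 1 := by omega
        rw [harith] at e3
        exact str e1 (chain e2 e3)
    refine ⟨pasp_lt party j F top succ, ?_, ?_, ?_⟩
    · -- strict total order
      refine { trichotomous := ?_, irrefl := ?_, trans := ?_ }
      · intro a b
        rcases eq_or_ne a b with rfl | hne
        · exact fun _ _ => rfl
        · have htinj : party a = party b → s a = s b → t a ≠ t b := by
            intro hp hseq hteq
            apply hne
            apply rkinj
            by_cases hz : s a = 0
            · have h1 := t0 a hz
              have h2 := t0 b (hseq ▸ hz)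
              rw [h1, h2] at hteq
              have := rkN a
              have := rkN b
              omega
            · have h1 := tne a hz
              have h2 := tne b (fun hzz => hz (hseq ▸ hzz))
              rw [h1, h2] at hteq
              exact hteq
          unfold pasp_lt
          rw [← hs, ← ht]
          apply fun H : (_ ∨ a = b ∨ _) => (fun hn1 hn2 => H.elim (fun hx => absurd hx hn1) (fun hr => hr.elim id (fun hy => absurd hy hn2)))
          rcases lt_trichotomy (party a) (party b) with h1 | h1 | h1
          · exact Or.inl (Or.inl h1)
          · rcases lt_trichotomy (s a) (s b) with h2 | h2 | h2
            · exact Or.inl (Or.inr ⟨h1, Or.inl h2⟩)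
            · rcases lt_trichotomy (t a) (t b) with h3 | h3 | h3
              · exact Or.inl (Or.inr ⟨h1, Or.inr ⟨h2, h3⟩⟩)
              · exact absurd h3 (htinj h1 h2)
              · exact Or.inr (Or.inr (Or.inr ⟨h1.symm, Or.inr ⟨h2.symm, h3⟩⟩))
            · exact Or.inr (Or.inr (Or.inr ⟨h1.symm, Or.inl h2⟩))
          · exact Or.inr (Or.inr (Or.inl h1))
      · intro a hcon
        unfold pasp_lt at hcon
        omega
      · intro a b c h1 h2
        unfold pasp_lt at h1 h2 ⊢
        omega
    · -- compatibility
      intro c c' h1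
      unfold pasp_lt at h1
      omega
    · -- single-peakedness
      have ltne' : ∀ a b : C, pasp_lt party j F top succ a b → a ≠ b := by
        intro a b h1 he
        subst he
        unfold pasp_lt at h1
        omega
      have RM : ∀ a b : C, pasp_lt party j F top succ a b → s a ≠ 0 → succ a b := by
        intro a b hab hsa
        have hne : a ≠ b := ltne' a b hab
        unfold pasp_lt at hab
        rw [← hs, ← ht] at hab
        by_cases hatop : a = top
        · subst hatop
          exact htop b (Ne.symm hne)
        · have hcond : ¬(party a < j ∨ (party a = j ∧ F)) := by
            intro hco
            rcases s_spec a with ⟨h1, _⟩ | ⟨_, _, h1⟩ | ⟨_, h1, _⟩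
            · exact hatop h1
            · rw [← hs] at h1; exact hsa h1
            · exact h1 hco
          have hsa2 : s a = 2 := by
            rcases s_spec a with ⟨h1, _⟩ | ⟨_, h1, _⟩ | ⟨_, _, h1⟩
            · exact absurd h1 hatop
            · exact absurd h1 hcond
            · rw [← hs] at h1; exact h1
          push_neg at hcond
          have hpa : j ≤ party a := by omega
          rcases hab with hltp | ⟨hpeq, hrest⟩
          · -- different parties
            obtain ⟨d, hd⟩ : ∃ d, party b = party a + d + 1 := ⟨party b - party a - 1, by omega⟩
            have e3 : succ (l (party a)) (h (party b)) := by
              rw [hd]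
              refine Rchain d (party a) hpa ?_ (by rw [← hd]; exact hp2 b)
              intro he hf
              exact (hcond.2 he) hf
            have e1 : a = l (party a) ∨ succ a (l (party a)) := hlw (party a) (hp1 a) (hp2 a) a rfl
            have e4 : b = h (party b) ∨ succ (h (party b)) b := hhb (party b) (hp1 b) (hp2 b) b rfl
            exact chain e1 (chain2 e3 e4)
          · -- same party
            have hsb2 : s b = 2 := by
              have := s_le2 b
              omega
            have hta := tne a (by omega)
            have htb := tne b (by omega)
            have htlt : pasp_rk succ a < pasp_rk succ b := by
              rw [← hta, ← htb]
              omega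
            rcases tri a b hne with h1 | h1
            · exact h1
            · exact absurd (rkmono b a h1) (by omega)
      have LM : ∀ a b : C, pasp_lt party j F top succ a b → s b = 0 → succ b a := by
        intro a b hab hsb
        have hne : a ≠ b := ltne' a b hab
        unfold pasp_lt at hab
        rw [← hs, ← ht] at hab
        have hbspec : b ≠ top ∧ (party b < j ∨ (party b = j ∧ F)) := by
          rcases s_spec b with ⟨_, h1⟩ | ⟨h1, h2, _⟩ | ⟨_, _, h1⟩
          · rw [← hs] at h1; omega
          · exact ⟨h1, h2⟩
          · rw [← hs] at h1; omega
        rcases hab with hltp | ⟨hpeq, hrest⟩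
        · -- different parties
          have hq2 : 2 ≤ party b := by have := hp1 a; omega
          have e1 : b = l (party b) ∨ succ b (l (party b)) := hlw (party b) (hp1 b) (hp2 b) b rfl
          obtain ⟨d, hd⟩ : ∃ d, party a = party b - d - 1 ∧ d + 1 < party b :=
            ⟨party b - party a - 1, by have := hp1 a; omega⟩
          have e3 : succ (l (party b)) (h (party a)) := by
            rw [hd.1]
            refine Lchain d (party b) ?_ ?_ hd.2
            · rcases hbspec.2 with h1 | h1
              · omega
              · omega
            · intro he
              rcases hbspec.2 with h1 | h1
              · omega
              · exact h1.2
          have e4 : a = h (party a) ∨ succ (h (party a)) a := hhb (party a) (hp1 a) (hp2 a) a rfl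
          exact chain e1 (chain2 e3 e4)
        · -- same party
          have hsa0 : s a = 0 := by omega
          have hta := t0 a hsa0
          have htb := t0 b hsb
          have hrka := rkN a
          have hrkb := rkN b
          have htlt : pasp_rk succ b < pasp_rk succ a := by omega
          rcases tri b a (Ne.symm hne) with h1 | h1
          · exact h1
          · exact absurd (rkmono a b h1) (by omega)
      intro a b c h1 h2 hab
      by_cases hsb : s b = 0
      · exact absurd hab (asym b a (LM a b h1 hsb))
      · exact RM b c h2 hsb
end

section
/- Suppose each vote in a profile Π over candidate set C has the candidates of parties P_1 ∪ ... ∪ P_i ∪ P_j ∪ ... ∪ P_m as a suffix (i.e., every candidate outside this union is preferred by every voter to every candidate in this union), and let Q be the set of candidates not in this suffix. If the restriction of Π to Q is party-aligned single-peaked with party axis Q_1 < ... < Q_k, and Π restricted to the suffix candidates is consistent with ordering parties P_1, ..., P_i on the left and P_j, ..., P_m on the right, then Π is party-aligned single-peaked with party axis P_1, ..., P_i, Q_1, ..., Q_k, P_j, ..., P_m. -/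
/-- Party-aligned single-peakedness of a vote restricted to a subset `Q` of the
candidates, with parties indexed by naturals (axis = order of indices). -/
def PASPVoteOn {C : Type*} (Q : Set C) (party : C → ℕ) (succ : C → C → Prop) : Prop :=
  ∃ lt : C → C → Prop,
    (∀ a ∈ Q, ¬ lt a a) ∧
    (∀ a ∈ Q, ∀ b ∈ Q, ∀ c ∈ Q, lt a b → lt b c → lt a c) ∧
    (∀ a ∈ Q, ∀ b ∈ Q, a ≠ b → lt a b ∨ lt b a) ∧
    (∀ a ∈ Q, ∀ b ∈ Q, lt a b → party a ≤ party b) ∧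
    (∀ a ∈ Q, ∀ b ∈ Q, ∀ c ∈ Q, lt a b → lt b c → succ a b → succ b c)

/-- Lemma (reducing the problem): if the candidates of the extremal parties
`P_1,…,P_i, P_j,…,P_m` form a suffix of every vote of a party-aligned
single-peaked profile, `Q` is the set of remaining (middle) candidates, and the
restriction of the profile to `Q` is party-aligned single-peaked with the middle
parties reordered by `π`, then the whole profile is party-aligned single-peaked
with the party axis `P_1,…,P_i, Q_1,…,Q_k, P_j,…,P_m` (middle parties reindexed
by `π`, extremal parties keeping their indices). -/
theorem reducing_problem
    {C V : Type*} [Fintype C] {m : ℕ}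
    (party : C → ℕ) (hpr : ∀ c : C, party c ∈ Finset.Icc 1 m)
    (succ : V → C → C → Prop) (hsto : ∀ v : V, IsStrictTotalOrder C (succ v))
    (hPASP : ∀ v : V, PASPVote party (succ v))
    (i j : ℕ) (hij : i < j) (hjm : j ≤ m + 1)
    (hsuffix : ∀ (v : V) (c c' : C), (i < party c ∧ party c < j) →
      (party c' ≤ i ∨ j ≤ party c') → succ v c c')
    (π : ℕ → ℕ) (hπ : Set.BijOn π (Set.Ioo i j) (Set.Ioo i j))
    (hQ : ∀ v : V, PASPVoteOn {c : C | i < party c ∧ party c < j}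
      (fun c => π (party c)) (succ v)) :
    ∀ v : V, PASPVote
      (fun c => if i < party c ∧ party c < j then π (party c) else party c)
      (succ v) := by
  intro v
  obtain ⟨lt₀, h0, hc0, hs0⟩ := hPASP v
  have h0t : ∀ a b : C, lt₀ a b ∨ a = b ∨ lt₀ b a := fun a b => by
    have := h0.trichotomous a b; tauto
  have h0i : ∀ a : C, ¬ lt₀ a a := h0.irrefl
  have hsi : ∀ a : C, ¬ succ v a a := (hsto v).irrefl
  have hstr : ∀ a b c : C, succ v a b → succ v b c → succ v a c :=
    fun a b c => (hsto v).trans a b c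
  have hsasym : ∀ a b : C, succ v a b → ¬ succ v b a := fun a b h h' => hsi a (hstr a b a h h')
  by_cases hne : ∃ q : C, i < party q ∧ party q < j
  case neg =>
    push_neg at hne
    refine ⟨lt₀, h0, ?_, hs0⟩
    intro c c' h
    have hc : ¬ (i < party c ∧ party c < j) := fun h' => absurd (hne c h'.1) (by omega)
    have hc' : ¬ (i < party c' ∧ party c' < j) := fun h' => absurd (hne c' h'.1) (by omega)
    simp only [if_neg hc, if_neg hc']
    exact hc0 c c' h
  case pos =>
    obtain ⟨q, hq1, hq2⟩ := hne
    obtain ⟨ltQ, hQi, hQtr, hQt, hQc, hQs⟩ := hQ v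
    set r : C → ℕ := fun c => if party c ≤ i then 0 else if party c < j then 1 else 2
      with hrdef
    have hr0 : ∀ c, r c = 0 ↔ party c ≤ i := by
      intro c; rw [hrdef]; dsimp only; split_ifs <;> simp <;> omega
    have hr1 : ∀ c, r c = 1 ↔ (i < party c ∧ party c < j) := by
      intro c; rw [hrdef]; dsimp only; split_ifs <;> simp <;> omega
    have hr2 : ∀ c, r c = 2 ↔ j ≤ party c := by
      intro c; rw [hrdef]; dsimp only; split_ifs <;> simp <;> omega
    have hrle : ∀ c, r c ≤ 2 := by
      intro c; rw [hrdef]; dsimp only; split_ifs <;> omega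
    have hmem : ∀ c : C, r c = 1 → c ∈ {c : C | i < party c ∧ party c < j} :=
      fun c h => (hr1 c).mp h
    have hlt0p : ∀ a b : C, party a < party b → lt₀ a b := by
      intro a b h
      rcases h0t a b with h' | rfl | h'
      · exact h'
      · omega
      · exact absurd (hc0 b a h') (by omega)
    have fact_nsucc : ∀ a b : C, party a ≤ i → party b ≤ i → lt₀ a b → ¬ succ v a b := by
      intro a b ha hb hab hs
      have hbq : lt₀ b q := hlt0p b q (by omega)
      exact hsasym b q (hs0 a b q hab hbq hs) (hsuffix v q b ⟨hq1, hq2⟩ (Or.inl hb))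
    have fact_succR : ∀ b c : C, j ≤ party b → j ≤ party c → lt₀ b c → succ v b c := by
      intro b c hb hc hbc
      exact hs0 q b c (hlt0p q b (by omega)) hbc (hsuffix v q b ⟨hq1, hq2⟩ (Or.inr hb))
    refine ⟨fun a b => r a < r b ∨ (r a = 0 ∧ r b = 0 ∧ lt₀ a b) ∨
      (r a = 1 ∧ r b = 1 ∧ ltQ a b) ∨ (r a = 2 ∧ r b = 2 ∧ lt₀ a b), ?_, ?_, ?_⟩
    · refine { trichotomous := ?_, irrefl := ?_, trans := ?_ }
      · intro a b
        refine fun hn1 hn2 => or_iff_not_imp_right.mp (or_iff_not_imp_left.mp ?_ hn1) hn2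
        rcases Nat.lt_trichotomy (r a) (r b) with h | h | h
        · exact Or.inl (Or.inl h)
        · rcases (by have := hrle a; omega : r a = 0 ∨ r a = 1 ∨ r a = 2) with ha | ha | ha
          · rcases h0t a b with h' | h' | h'
            · exact Or.inl (Or.inr (Or.inl ⟨ha, by omega, h'⟩))
            · exact Or.inr (Or.inl h')
            · exact Or.inr (Or.inr (Or.inr (Or.inl ⟨by omega, ha, h'⟩)))
          · by_cases hab : a = b
            · exact Or.inr (Or.inl hab)
            · rcases hQt a (hmem a ha) b (hmem b (by omega)) hab with h' | h'
              · exact Or.inl (Or.inr (Or.inr (Or.inl ⟨ha, by omega, h'⟩)))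
              · exact Or.inr (Or.inr (Or.inr (Or.inr (Or.inl ⟨by omega, ha, h'⟩))))
          · rcases h0t a b with h' | h' | h'
            · exact Or.inl (Or.inr (Or.inr (Or.inr ⟨ha, by omega, h'⟩)))
            · exact Or.inr (Or.inl h')
            · exact Or.inr (Or.inr (Or.inr (Or.inr (Or.inr ⟨by omega, ha, h'⟩))))
        · exact Or.inr (Or.inr (Or.inl h))
      · intro a h
        rcases h with h | ⟨_, _, h'⟩ | ⟨ha, _, h'⟩ | ⟨_, _, h'⟩
        · omega
        · exact h0i a h'
        · exact hQi a (hmem a ha) h'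
        · exact h0i a h'
      · intro a b c hab hbc
        rcases hab with h1 | ⟨ha, hb, hab'⟩ | ⟨ha, hb, hab'⟩ | ⟨ha, hb, hab'⟩ <;>
          rcases hbc with h2 | ⟨hb', hc, hbc'⟩ | ⟨hb', hc, hbc'⟩ | ⟨hb', hc, hbc'⟩ <;>
            first
            | (left; omega)
            | (exact absurd rfl (by omega : r b ≠ r b))
            | exact Or.inr (Or.inl ⟨by omega, by omega, h0.trans a b c hab' hbc'⟩)
            | exact Or.inr (Or.inr (Or.inl ⟨by omega, by omega,
                hQtr a (hmem a ha) b (hmem b hb) c (hmem c hc) hab' hbc'⟩))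
            | exact Or.inr (Or.inr (Or.inr ⟨by omega, by omega, h0.trans a b c hab' hbc'⟩))
    · intro a b hab
      dsimp only
      have hπmem : ∀ n, i < n → n < j → i < π n ∧ π n < j := by
        intro n hn1 hn2
        have := hπ.mapsTo (Set.mem_Ioo.mpr ⟨hn1, hn2⟩)
        exact Set.mem_Ioo.mp this
      rcases hab with h | ⟨ha, hb, h'⟩ | ⟨ha, hb, h'⟩ | ⟨ha, hb, h'⟩
      · have hb2 := hrle b
        rcases (by have := hrle a; omega : r a = 0 ∨ r a = 1) with ha | ha <;>
          rcases (by omega : r b = 1 ∨ r b = 2) with hb | hb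
        · have hpa := (hr0 a).mp ha
          have hpb := (hr1 b).mp hb
          have hπb := hπmem _ hpb.1 hpb.2
          rw [if_neg (by omega), if_pos hpb]; omega
        · have hpa := (hr0 a).mp ha
          have hpb := (hr2 b).mp hb
          rw [if_neg (by omega), if_neg (by omega)]; omega
        · exact absurd rfl (by omega : r a ≠ r a)
        · have hpa := (hr1 a).mp ha
          have hpb := (hr2 b).mp hb
          have hπa := hπmem _ hpa.1 hpa.2
          rw [if_pos hpa, if_neg (by omega)]; omega
      · have hpa := (hr0 a).mp ha
        have hpb := (hr0 b).mp hb
        rw [if_neg (by omega), if_neg (by omega)]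
        exact hc0 a b h'
      · have hpa := (hr1 a).mp ha
        have hpb := (hr1 b).mp hb
        rw [if_pos hpa, if_pos hpb]
        exact hQc a (hmem a ha) b (hmem b hb) h'
      · have hpa := (hr2 a).mp ha
        have hpb := (hr2 b).mp hb
        rw [if_neg (by omega), if_neg (by omega)]
        exact hc0 a b h'
    · intro a b c hab hbc hs
      have hcle := hrle c
      have hble := hrle b
      rcases hab with h1 | ⟨ha, hb, hab'⟩ | ⟨ha, hb, hab'⟩ | ⟨ha, hb, hab'⟩
      · rcases hbc with h2 | ⟨hb', hc, hbc'⟩ | ⟨hb', hc, hbc'⟩ | ⟨hb', hc, hbc'⟩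
        · exact hsuffix v b c ((hr1 b).mp (by omega)) (Or.inr ((hr2 c).mp (by omega)))
        · exact absurd rfl (by omega : r b ≠ r b)
        · exact absurd (hsuffix v b a ((hr1 b).mp hb') (Or.inl ((hr0 a).mp (by omega))))
            (hsasym a b hs)
        · exact fact_succR b c ((hr2 b).mp hb') ((hr2 c).mp hc) hbc'
      · rcases hbc with h2 | ⟨hb', hc, hbc'⟩ | ⟨hb', hc, hbc'⟩ | ⟨hb', hc, hbc'⟩
        · exact absurd hs (fact_nsucc a b ((hr0 a).mp ha) ((hr0 b).mp hb) hab')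
        · exact hs0 a b c hab' hbc' hs
        · exact absurd rfl (by omega : r b ≠ r b)
        · exact absurd rfl (by omega : r b ≠ r b)
      · rcases hbc with h2 | ⟨hb', hc, hbc'⟩ | ⟨hb', hc, hbc'⟩ | ⟨hb', hc, hbc'⟩
        · exact hsuffix v b c ((hr1 b).mp hb) (Or.inr ((hr2 c).mp (by omega)))
        · exact absurd rfl (by omega : r b ≠ r b)
        · exact hQs a (hmem a ha) b (hmem b hb) c (hmem c hc) hab' hbc' hs
        · exact absurd rfl (by omega : r b ≠ r b)
      · rcases hbc with h2 | ⟨hb', hc, hbc'⟩ | ⟨hb', hc, hbc'⟩ | ⟨hb', hc, hbc'⟩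
        · exact absurd rfl (by omega : r b ≠ r b)
        · exact absurd rfl (by omega : r b ≠ r b)
        · exact absurd rfl (by omega : r b ≠ r b)
        · exact hs0 a b c hab' hbc' hs
end

section
/- Suppose a voter's vote ≻_v is party-aligned single-peaked with party axis P_1 < ... < P_m. Then there exist two parties, adjacent along the party axis (or possibly a single party), such that in every reduced election arising from any nomination scheme (one nominee per party), the voter's most-preferred nominee belongs to one of these two parties. That is, each voter can vote for nominees of at most two, adjacent, parties across all nomination schemes. -/
/-- A nomination scheme: one nominee of party `i` for each `i ∈ {1,…,k}`. -/
def ValidNom {C : Type*} (party : C → ℕ) (k : ℕ) (nom : ℕ → C) : Prop :=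
  ∀ i ∈ Finset.Icc 1 k, party (nom i) = i

/-- The set of voters whose favourite nominee is the nominee of party `i`. -/
def votesFor {C V : Type*} (succ : V → C → C → Prop) (k : ℕ) (nom : ℕ → C)
    (i : ℕ) : Set V :=
  {v | ∀ i' ∈ Finset.Icc 1 k, i' ≠ i → succ v (nom i) (nom i')}

/-- Plurality score of party `i`'s nominee in the reduced election. -/
noncomputable def score {C V : Type*} (succ : V → C → C → Prop) (k : ℕ)
    (nom : ℕ → C) (i : ℕ) : ℕ :=
  (votesFor succ k nom i).ncard

/-- Party `i`'s nominee is a Plurality winner of the reduced election. -/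
def IsWinner {C V : Type*} (succ : V → C → C → Prop) (k : ℕ) (nom : ℕ → C)
    (i : ℕ) : Prop :=
  ∀ i' ∈ Finset.Icc 1 k, score succ k nom i' ≤ score succ k nom i

/-- `c'` is a Nash deviation by party `i` for the nomination scheme `nom`. -/
def NashDeviation {C V : Type*} (party : C → ℕ) (succ : V → C → C → Prop)
    (k : ℕ) (nom : ℕ → C) (i : ℕ) (c' : C) : Prop :=
  party c' = i ∧ c' ≠ nom i ∧ ¬ IsWinner succ k nom i ∧
    IsWinner succ k (Function.update nom i c') i

/-- A nomination scheme is a pure Nash equilibrium if no party has a Nash deviation. -/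
def NashEq {C V : Type*} (party : C → ℕ) (succ : V → C → C → Prop) (k : ℕ)
    (nom : ℕ → C) : Prop :=
  ∀ i ∈ Finset.Icc 1 k, ∀ c' : C, ¬ NashDeviation party succ k nom i c'

/-- Lemma: for a party-aligned single-peaked vote there are (at most) two parties,
adjacent along the party axis (possibly one single party), such that in every
reduced election the voter's most-preferred nominee belongs to one of them. -/
theorem two_possible_votes
    {C : Type*} [Fintype C] {m : ℕ} (hm : 1 ≤ m)
    (party : C → ℕ) (hpr : ∀ c : C, party c ∈ Finset.Icc 1 m)
    (hne : ∀ i ∈ Finset.Icc 1 m, ∃ c : C, party c = i)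
    (succ : C → C → Prop) (hsto : IsStrictTotalOrder C succ)
    (hPASP : PASPVote party succ) :
    ∃ A ∈ Finset.Icc 1 m, ∃ B ∈ Finset.Icc 1 m, (B = A ∨ B = A + 1) ∧
      ∀ nom : ℕ → C, ValidNom party m nom →
        ∀ i ∈ Finset.Icc 1 m,
          (∀ i' ∈ Finset.Icc 1 m, i' ≠ i → succ (nom i) (nom i')) →
          i = A ∨ i = B := by
  classical
  obtain ⟨lt, hlt, hcomp, hSP⟩ := hPASP
  have hstrans : ∀ a b c : C, succ a b → succ b c → succ a c := hsto.trans
  have hsirr : ∀ a : C, ¬ succ a a := hsto.irrefl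
  have hstri : ∀ a b : C, succ a b ∨ a = b ∨ succ b a := by haveI := hsto; exact trichotomous_of succ
  have hsasym : ∀ a b : C, succ a b → succ b a → False :=
    fun a b h1 h2 => hsirr a (hstrans a b a h1 h2)
  have hltirr : ∀ a : C, ¬ lt a a := hlt.irrefl
  have hlttri : ∀ a b : C, lt a b ∨ a = b ∨ lt b a := by haveI := hlt; exact trichotomous_of lt
  -- a peak exists
  have hpeak : ∃ p : C, ∀ c : C, c ≠ p → succ p c := by
    have key : ∀ s : Finset C, s.Nonempty → ∃ p ∈ s, ∀ c ∈ s, c ≠ p → succ p c := by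
      intro s hs
      induction hs using Finset.Nonempty.cons_induction with
      | singleton a => exact ⟨a, by simp, by simp⟩
      | cons a s ha hs ih =>
        obtain ⟨p, hps, hp⟩ := ih
        rcases hstri a p with h | h | h
        · refine ⟨a, by simp, ?_⟩
          intro c hc hca
          rcases Finset.mem_cons.mp hc with rfl | hc'
          · exact absurd rfl hca
          · rcases eq_or_ne c p with rfl | hcp
            · exact h
            · exact hstrans a p c h (hp c hc' hcp)
        · refine ⟨p, Finset.mem_cons.mpr (Or.inr hps), ?_⟩
          intro c hc hcp
          rcases Finset.mem_cons.mp hc with rfl | hc'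
          · exact absurd h hcp
          · exact hp c hc' hcp
        · refine ⟨p, Finset.mem_cons.mpr (Or.inr hps), ?_⟩
          intro c hc hcp
          rcases Finset.mem_cons.mp hc with rfl | hc'
          · exact h
          · exact hp c hc' hcp
    have hCne : Nonempty C := by
      obtain ⟨c, _⟩ := hne 1 (by simp [hm])
      exact ⟨c⟩
    obtain ⟨p, _, hp⟩ := key Finset.univ Finset.univ_nonempty
    exact ⟨p, fun c hc => hp c (Finset.mem_univ c) hc⟩
  obtain ⟨p, hpk⟩ := hpeak
  -- party comparison gives axis comparison
  have partylt : ∀ a b : C, party a < party b → lt a b := by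
    intro a b h
    rcases hlttri a b with h' | h' | h'
    · exact h'
    · subst h'; omega
    · exact absurd (hcomp b a h') (by omega)
  -- left of peak: closer is better
  have hleft : ∀ a b : C, lt a b → (lt b p ∨ b = p) → succ b a := by
    intro a b hab hbp
    rcases hbp with hbp | he
    · have hbne : b ≠ p := fun h => hltirr p (h ▸ hbp)
      rcases hstri a b with h | h | h
      · exact absurd (hpk b hbne) (fun h2 => hsasym b p (hSP a b p hab hbp h) h2)
      · subst h; exact absurd hab (hltirr a)
      · exact h
    · rw [he]
      exact hpk a (fun h2 => hltirr p (by rw [h2, he] at hab; exact hab))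
  -- right of peak: closer is better
  have hright : ∀ b c : C, lt b c → (lt p b ∨ b = p) → succ b c := by
    intro b c hbc hpb
    rcases hpb with hpb | he
    · exact hSP p b c hpb hbc (hpk b (fun h => hltirr p (h ▸ hpb)))
    · rw [he]
      exact hpk c (fun h2 => hltirr p (by rw [h2, he] at hbc; exact hbc))
  set t := party p with ht
  have htm : 1 ≤ t ∧ t ≤ m := by have := hpr p; simpa using this
  -- every possible winner is in {t-1, t, t+1}
  have hrange : ∀ nom : ℕ → C, ValidNom party m nom → ∀ i ∈ Finset.Icc 1 m,
      (∀ i' ∈ Finset.Icc 1 m, i' ≠ i → succ (nom i) (nom i')) →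
      t - 1 ≤ i ∧ i ≤ t + 1 := by
    intro nom hvn i hi hw
    have hi' : 1 ≤ i ∧ i ≤ m := by simpa using hi
    have hpi : party (nom i) = i := hvn i hi
    constructor
    · by_contra h
      have h2 : i + 1 < t := by omega
      have hj : t - 1 ∈ Finset.Icc 1 m := by simp; omega
      have hpj : party (nom (t-1)) = t - 1 := hvn _ hj
      have h1 : succ (nom i) (nom (t-1)) := hw _ hj (by omega)
      have l1 : lt (nom i) (nom (t-1)) := partylt _ _ (by omega)
      have l2 : lt (nom (t-1)) p := partylt _ _ (by omega)
      have hne' : nom (t-1) ≠ p := fun h => by rw [h] at hpj; omega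
      exact hsasym _ _ (hSP _ _ _ l1 l2 h1) (hpk _ hne')
    · by_contra h
      have h2 : t + 1 < i := by omega
      have hj : t + 1 ∈ Finset.Icc 1 m := by simp; omega
      have hpj : party (nom (t+1)) = t + 1 := hvn _ hj
      have h1 : succ (nom i) (nom (t+1)) := hw _ hj (by omega)
      have l1 : lt p (nom (t+1)) := partylt _ _ (by omega)
      have l2 : lt (nom (t+1)) (nom i) := partylt _ _ (by omega)
      exact hsasym _ _ h1 (hright _ _ l2 (Or.inl l1))
  -- the decisive condition
  by_cases hQ : ∃ x y : C, party x = t ∧ party y = t + 1 ∧ lt x p ∧ succ y x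
  · -- winner cannot be t - 1
    obtain ⟨x, y, hx, hy, hxp, hyx⟩ := hQ
    have htm' : t + 1 ≤ m := by have := hpr y; simp at this; omega
    refine ⟨t, by simp; omega, t + 1, by simp; omega, Or.inr rfl, ?_⟩
    intro nom hvn i hi hw
    have hr := hrange nom hvn i hi hw
    have hi' : 1 ≤ i ∧ i ≤ m := by simpa using hi
    have hd : i + 1 ≠ t := by
      intro hit
      have htI : t ∈ Finset.Icc 1 m := by simp; omega
      have hpt : party (nom t) = t := hvn _ htI
      have hpi : party (nom i) = i := hvn i hi
      have h1 : succ (nom i) (nom t) := hw _ htI (by omega)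
      rcases hlttri (nom t) p with hl | he | hr2
      · have l1 : lt (nom i) (nom t) := partylt _ _ (by omega)
        exact hsasym _ _ h1 (hleft _ _ l1 (Or.inl hl))
      · have hne' : nom i ≠ p := fun h => by rw [h] at hpi; omega
        rw [he] at h1
        exact hsasym _ _ h1 (hpk _ hne')
      · have s1 : succ (nom t) y := hright _ _ (partylt _ _ (by omega)) (Or.inl hr2)
        have s3 : succ x (nom i) := hleft _ _ (partylt _ _ (by omega)) (Or.inl hxp)
        exact hsasym _ _ h1 (hstrans _ _ _ (hstrans _ _ _ s1 hyx) s3)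
    omega
  · -- winner cannot be t + 1
    have hnoup : ∀ nom : ℕ → C, ValidNom party m nom → ∀ i ∈ Finset.Icc 1 m,
        (∀ i' ∈ Finset.Icc 1 m, i' ≠ i → succ (nom i) (nom i')) → i ≠ t + 1 := by
      intro nom hvn i hi hw hit
      have hi' : 1 ≤ i ∧ i ≤ m := by simpa using hi
      have htI : t ∈ Finset.Icc 1 m := by simp; omega
      have hpt : party (nom t) = t := hvn _ htI
      have hpi : party (nom i) = i := hvn i hi
      have h1 : succ (nom i) (nom t) := hw _ htI (by omega)
      rcases hlttri (nom t) p with hl | he | hr2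
      · exact hQ ⟨nom t, nom i, hpt, by omega, hl, h1⟩
      · have hne' : nom i ≠ p := fun h => by rw [h] at hpi; omega
        rw [he] at h1
        exact hsasym _ _ h1 (hpk _ hne')
      · have l1 : lt (nom t) (nom i) := partylt _ _ (by omega)
        exact hsasym _ _ h1 (hright _ _ l1 (Or.inl hr2))
    by_cases ht2 : 2 ≤ t
    · refine ⟨t - 1, by simp; omega, t, by simp; omega, Or.inr (by omega), ?_⟩
      intro nom hvn i hi hw
      have hr := hrange nom hvn i hi hw
      have hu := hnoup nom hvn i hi hw
      have hi' : 1 ≤ i ∧ i ≤ m := by simpa using hi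
      omega
    · refine ⟨1, by simp; omega, 1, by simp; omega, Or.inl rfl, ?_⟩
      intro nom hvn i hi hw
      have hr := hrange nom hvn i hi hw
      have hu := hnoup nom hvn i hi hw
      have hi' : 1 ≤ i ∧ i ≤ m := by simpa using hi
      omega
end

section
/- Consider an election with parties ordered along a common single-peakedness axis. If the leftmost party P_L nominates its rightmost candidate and the rightmost party P_R nominates its leftmost candidate (a 'centrist' nomination scheme), then neither P_L nor P_R has a Nash deviation: if P_L's nominee is not a Plurality winner, no other candidate of P_L can become a winner by replacing the nominee (and symmetrically for P_R). -/

lemma no_dev_of_between {C V : Type*} [Fintype V] {k : ℕ}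
    (party : C → ℕ) (succ : V → C → C → Prop)
    (nom : ℕ → C) (i : ℕ) (hi : i ∈ Finset.Icc 1 k) (c' : C)
    (hB : ∀ v : V, ∀ j ∈ Finset.Icc 1 k, j ≠ i →
      (succ v c' (nom j) → succ v (nom i) (nom j)) ∧
      (succ v (nom j) (nom i) → succ v (nom j) c')) :
    ¬ NashDeviation party succ k nom i c' := by
  rintro ⟨hp, hne', hnw, hw⟩
  simp only [IsWinner, not_forall] at hnw
  obtain ⟨j, hj, hgt⟩ := hnw
  push_neg at hgt
  have hji : j ≠ i := by rintro rfl; exact lt_irrefl _ hgt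
  set nom' := Function.update nom i c' with hnom'
  have h1 : votesFor succ k nom' i ⊆ votesFor succ k nom i := by
    intro v hv j' hj' hj'i
    have h := hv j' hj' hj'i
    rw [hnom', Function.update_self, Function.update_of_ne hj'i] at h
    exact (hB v j' hj' hj'i).1 h
  have h2 : votesFor succ k nom j ⊆ votesFor succ k nom' j := by
    intro v hv j' hj' hj'j
    rw [hnom', Function.update_of_ne hji]
    rcases eq_or_ne j' i with rfl | hj'i
    · rw [Function.update_self]
      exact (hB v j hj hji).2 (hv j' hj' hj'j)
    · rw [Function.update_of_ne hj'i]
      exact hv j' hj' hj'j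
  have hs1 : score succ k nom' i ≤ score succ k nom i :=
    Set.ncard_le_ncard h1 (Set.toFinite _)
  have hs2 : score succ k nom j ≤ score succ k nom' j :=
    Set.ncard_le_ncard h2 (Set.toFinite _)
  have := hw j hj
  omega

/-- In a centrist nomination scheme (the leftmost party nominates its rightmost
candidate and the rightmost party its leftmost candidate), neither the leftmost
nor the rightmost party has a Nash deviation.  Here all votes are single-peaked
with respect to the common axis `lt`, along which parties occupy consecutive
positions (`lt c c' → party c ≤ party c'`). -/
theorem centrist_no_deviation
    {C V : Type*} [Fintype V] {k : ℕ} (hk : 1 ≤ k)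
    (party : C → ℕ) (hpr : ∀ c : C, party c ∈ Finset.Icc 1 k)
    (hne : ∀ i ∈ Finset.Icc 1 k, ∃ c : C, party c = i)
    (lt : C → C → Prop) (hlt : IsStrictTotalOrder C lt)
    (hcompat : ∀ c c' : C, lt c c' → party c ≤ party c')
    (succ : V → C → C → Prop) (hsto : ∀ v : V, IsStrictTotalOrder C (succ v))
    (hsp : ∀ v : V, SinglePeakedWith (succ v) lt)
    (nom : ℕ → C) (hnom : ValidNom party k nom)
    (hL : ∀ c : C, party c = 1 → c ≠ nom 1 → lt c (nom 1))
    (hR : ∀ c : C, party c = k → c ≠ nom k → lt (nom k) c) :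
    (∀ c' : C, ¬ NashDeviation party succ k nom 1 c') ∧
    (∀ c' : C, ¬ NashDeviation party succ k nom k c') := by
  have trich : ∀ a b : C, lt a b ∨ a = b ∨ lt b a := fun a b => by
    by_cases h1 : lt a b
    · exact Or.inl h1
    by_cases h2 : lt b a
    · exact Or.inr (Or.inr h2)
    exact Or.inr (Or.inl (hlt.trichotomous a b h1 h2))
  have strans : ∀ v : V, ∀ {a b c : C}, succ v a b → succ v b c → succ v a c :=
    fun v {a b c} h1 h2 => (hsto v).trans _ _ _ h1 h2
  have sirr : ∀ v : V, ∀ a : C, ¬ succ v a a := fun v a => (hsto v).irrefl a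
  have stot : ∀ v : V, ∀ a b : C, a ≠ b → succ v a b ∨ succ v b a := by
    intro v a b hab
    rcases (show succ v a b ∨ a = b ∨ succ v b a by
      by_cases h1 : succ v a b
      · exact Or.inl h1
      by_cases h2 : succ v b a
      · exact Or.inr (Or.inr h2)
      exact Or.inr (Or.inl ((hsto v).trichotomous a b h1 h2))) with h | h | h
    · exact Or.inl h
    · exact absurd h hab
    · exact Or.inr h
  have hk1 : (1 : ℕ) ∈ Finset.Icc 1 k := by simp [hk]
  have hkk : k ∈ Finset.Icc 1 k := by simp [hk]
  constructor
  · intro c'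
    rcases eq_or_ne (party c') 1 with hp | hp
    swap
    · rintro ⟨hp', _⟩; exact hp hp'
    rcases eq_or_ne c' (nom 1) with hc | hc
    · rintro ⟨_, hne', _⟩; exact hne' hc
    have hlt1 : lt c' (nom 1) := hL c' hp hc
    apply no_dev_of_between party succ nom 1 hk1 c'
    intro v j hj hj1
    have hj2 : 2 ≤ j := by
      simp only [Finset.mem_Icc] at hj; omega
    have hnj : nom 1 ≠ nom j := by
      intro h
      have e1 := hnom 1 hk1
      have e2 := hnom j hj
      rw [h] at e1; omega
    have hlt2 : lt (nom 1) (nom j) := by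
      rcases trich (nom 1) (nom j) with h | h | h
      · exact h
      · exact absurd h hnj
      · have h2 := hcompat _ _ h
        rw [hnom 1 hk1, hnom j hj] at h2; omega
    constructor
    · intro h
      rcases stot v c' (nom 1) hc with h1 | h1
      · exact hsp v _ _ _ hlt1 hlt2 h1
      · exact strans v h1 h
    · intro h
      rcases stot v (nom 1) c' (Ne.symm hc) with h1 | h1
      · exact strans v h h1
      · exact absurd (strans v (hsp v _ _ _ hlt1 hlt2 h1) h) (sirr v _)
  · intro c'
    rcases eq_or_ne (party c') k with hp | hp
    swap
    · rintro ⟨hp', _⟩; exact hp hp'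
    rcases eq_or_ne c' (nom k) with hc | hc
    · rintro ⟨_, hne', _⟩; exact hne' hc
    have hlt1 : lt (nom k) c' := hR c' hp hc
    apply no_dev_of_between party succ nom k hkk c'
    intro v j hj hjk
    have hnj : nom j ≠ nom k := by
      intro h
      have e1 := hnom k hkk
      have e2 := hnom j hj
      rw [h] at e2; omega
    have hlt2 : lt (nom j) (nom k) := by
      rcases trich (nom j) (nom k) with h | h | h
      · exact h
      · exact absurd h hnj
      · have h2 := hcompat _ _ h
        simp only [Finset.mem_Icc] at hj
        rw [hnom k hkk, hnom j (by simp [hj])] at h2; omega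
    constructor
    · intro h
      rcases stot v (nom j) (nom k) hnj with h1 | h1
      · exact absurd (strans v h (strans v h1 (hsp v _ _ _ hlt2 hlt1 h1))) (sirr v _)
      · exact h1
    · intro h
      exact strans v h (hsp v _ _ _ hlt2 hlt1 h)
end

section
/- There exists an election with two parties A = {a₁, a₂} and B = {b₁, b₂} and three voters with preferences v₁: a₁ ≻ b₁ ≻ a₂ ≻ b₂; v₂: b₁ ≻ a₂ ≻ b₂ ≻ a₁; v₃: a₂ ≻ b₂ ≻ a₁ ≻ b₁, whose profile is party-aligned single-peaked, but which admits no pure Nash equilibrium: every one of the four possible nomination schemes admits a Nash deviation by the losing party. -/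
/-- Rank table of the three voters over the candidates `a₁ = 0`, `a₂ = 1`,
`b₁ = 2`, `b₂ = 3` (smaller rank = more preferred):
`v₁: a₁ ≻ b₁ ≻ a₂ ≻ b₂`, `v₂: b₁ ≻ a₂ ≻ b₂ ≻ a₁`, `v₃: a₂ ≻ b₂ ≻ a₁ ≻ b₁`. -/
def rk8 : Matrix (Fin 3) (Fin 4) ℕ := !![0, 2, 1, 3; 3, 1, 0, 2; 2, 0, 3, 1]

/-- The preference relations of the three voters. -/
def succ8 (v : Fin 3) (c c' : Fin 4) : Prop := rk8 v c < rk8 v c'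

/-- Parties `A = {a₁, a₂}` (index 1) and `B = {b₁, b₂}` (index 2). -/
def party8 : Fin 4 → ℕ := fun c => if c.val < 2 then 1 else 2

/- ### Auxiliary material -/

instance (v : Fin 3) (x y : Fin 4) : Decidable (succ8 v x y) := by
  unfold succ8; infer_instance

/-- Perceived candidate axes of the three voters (compatible with the party
axis: party-1 candidates `0, 1` come before party-2 candidates `2, 3`). -/
def ax8 : Matrix (Fin 3) (Fin 4) ℕ := !![1, 0, 2, 3; 0, 1, 2, 3; 0, 1, 3, 2]

/-- Number of voters preferring `x` to `y`. -/
noncomputable def cnt (x y : Fin 4) : ℕ := ({v : Fin 3 | succ8 v x y}).ncard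

lemma cnt_02 : cnt 0 2 = 2 := by rw [cnt, Set.ncard_eq_toFinset_card']; decide
lemma cnt_20 : cnt 2 0 = 1 := by rw [cnt, Set.ncard_eq_toFinset_card']; decide
lemma cnt_03 : cnt 0 3 = 1 := by rw [cnt, Set.ncard_eq_toFinset_card']; decide
lemma cnt_30 : cnt 3 0 = 2 := by rw [cnt, Set.ncard_eq_toFinset_card']; decide
lemma cnt_12 : cnt 1 2 = 1 := by rw [cnt, Set.ncard_eq_toFinset_card']; decide
lemma cnt_21 : cnt 2 1 = 2 := by rw [cnt, Set.ncard_eq_toFinset_card']; decide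
lemma cnt_13 : cnt 1 3 = 3 := by rw [cnt, Set.ncard_eq_toFinset_card']; decide
lemma cnt_31 : cnt 3 1 = 0 := by rw [cnt, Set.ncard_eq_toFinset_card']; decide

lemma score1 (nom : ℕ → Fin 4) : score succ8 2 nom 1 = cnt (nom 1) (nom 2) := by
  unfold score cnt votesFor
  congr 1
  ext v
  simp only [Set.mem_setOf_eq, Finset.mem_Icc]
  constructor
  · intro h; exact h 2 ⟨by norm_num, le_refl 2⟩ (by norm_num)
  · intro h i' hi' hne
    have : i' = 2 := by omega
    subst this; exact h

lemma score2 (nom : ℕ → Fin 4) : score succ8 2 nom 2 = cnt (nom 2) (nom 1) := by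
  unfold score cnt votesFor
  congr 1
  ext v
  simp only [Set.mem_setOf_eq, Finset.mem_Icc]
  constructor
  · intro h; exact h 1 ⟨le_refl 1, by norm_num⟩ (by norm_num)
  · intro h i' hi' hne
    have : i' = 1 := by omega
    subst this; exact h

lemma isWinner1 (nom : ℕ → Fin 4) :
    IsWinner succ8 2 nom 1 ↔ cnt (nom 2) (nom 1) ≤ cnt (nom 1) (nom 2) := by
  unfold IsWinner
  constructor
  · intro h
    have := h 2 (by simp)
    rwa [score1, score2] at this
  · intro h i' hi'
    simp only [Finset.mem_Icc] at hi'
    obtain ⟨ha, hb⟩ := hi'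
    interval_cases i'
    · exact le_refl _
    · rw [score1, score2]; exact h

lemma isWinner2 (nom : ℕ → Fin 4) :
    IsWinner succ8 2 nom 2 ↔ cnt (nom 1) (nom 2) ≤ cnt (nom 2) (nom 1) := by
  unfold IsWinner
  constructor
  · intro h
    have := h 1 (by simp)
    rwa [score1, score2] at this
  · intro h i' hi'
    simp only [Finset.mem_Icc] at hi'
    obtain ⟨ha, hb⟩ := hi'
    interval_cases i'
    · rw [score1, score2]; exact h
    · exact le_refl _

/-- There is a two-party election with three voters whose profile is
party-aligned single-peaked, but every nomination scheme admits a Nash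
deviation (by the losing party); in particular no pure Nash equilibrium exists. -/
theorem two_parties_no_nash_equilibrium :
    (∀ v : Fin 3, PASPVote party8 (succ8 v)) ∧
    (∀ nom : ℕ → Fin 4, ValidNom party8 2 nom →
      (∃ c' : Fin 4, NashDeviation party8 succ8 2 nom 1 c') ∨
      (∃ c' : Fin 4, NashDeviation party8 succ8 2 nom 2 c')) ∧
    ¬ ∃ nom : ℕ → Fin 4, ValidNom party8 2 nom ∧ NashEq party8 succ8 2 nom := by
  have hdev : ∀ nom : ℕ → Fin 4, ValidNom party8 2 nom →
      (∃ c' : Fin 4, NashDeviation party8 succ8 2 nom 1 c') ∨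
      (∃ c' : Fin 4, NashDeviation party8 succ8 2 nom 2 c') := by
    intro nom hval
    have h1 : party8 (nom 1) = 1 := hval 1 (by simp)
    have h2 : party8 (nom 2) = 2 := hval 2 (by simp)
    have hn1 : nom 1 = 0 ∨ nom 1 = 1 := by
      have hv : (nom 1).val < 2 := by
        by_contra h; simp only [party8, if_neg h] at h1; omega
      simp only [Fin.ext_iff]
      omega
    have hn2 : nom 2 = 2 ∨ nom 2 = 3 := by
      have hv : ¬ (nom 2).val < 2 := by
        intro h; simp only [party8, if_pos h] at h2; omega
      have hlt := (nom 2).isLt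
      simp only [Fin.ext_iff]
      omega
    -- in each of the four cases, the losing party deviates
    rcases hn1 with e1 | e1 <;> rcases hn2 with e2 | e2
    · -- (a₁, b₁): A wins 2–1, B deviates to b₂
      right; refine ⟨3, rfl, by rw [e2]; decide, ?_, ?_⟩
      · rw [isWinner2, e1, e2, cnt_02, cnt_20]; omega
      · rw [isWinner2]
        simp only [Function.update_self, Function.update_of_ne (by norm_num : (1:ℕ) ≠ 2)]
        rw [e1, cnt_03, cnt_30]; omega
    · -- (a₁, b₂): B wins 2–1, A deviates to a₂
      left; refine ⟨1, rfl, by rw [e1]; decide, ?_, ?_⟩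
      · rw [isWinner1, e1, e2, cnt_03, cnt_30]; omega
      · rw [isWinner1]
        simp only [Function.update_self, Function.update_of_ne (by norm_num : (2:ℕ) ≠ 1)]
        rw [e2, cnt_13, cnt_31]; omega
    · -- (a₂, b₁): B wins 2–1, A deviates to a₁
      left; refine ⟨0, rfl, by rw [e1]; decide, ?_, ?_⟩
      · rw [isWinner1, e1, e2, cnt_12, cnt_21]; omega
      · rw [isWinner1]
        simp only [Function.update_self, Function.update_of_ne (by norm_num : (2:ℕ) ≠ 1)]
        rw [e2, cnt_02, cnt_20]; omega
    · -- (a₂, b₂): A wins 3–0, B deviates to b₁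
      right; refine ⟨2, rfl, by rw [e2]; decide, ?_, ?_⟩
      · rw [isWinner2, e1, e2, cnt_13, cnt_31]; omega
      · rw [isWinner2]
        simp only [Function.update_self, Function.update_of_ne (by norm_num : (1:ℕ) ≠ 2)]
        rw [e1, cnt_12, cnt_21]; omega
  refine ⟨?_, hdev, ?_⟩
  · intro v
    refine ⟨fun c c' => ax8 v c < ax8 v c',
      { trichotomous := ?_, irrefl := ?_, trans := ?_ }, ?_, ?_⟩
    · fin_cases v <;> decide
    · fin_cases v <;> decide
    · fin_cases v <;> decide
    · fin_cases v <;> decide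
    · unfold SinglePeakedWith; fin_cases v <;> decide
  · rintro ⟨nom, hval, heq⟩
    rcases hdev nom hval with ⟨c', hc'⟩ | ⟨c', hc'⟩
    · exact heq 1 (by simp) c' hc'
    · exact heq 2 (by simp) c' hc'
end

section
/- There exists a 1-D Euclidean election with four parties, each of size at most 2, whose preference profile is both single-peaked and party-aligned single-peaked, that admits no pure Nash equilibrium. Concretely: voters at positions 2 (×5), 3 (×2), 5 (×6), 8.9 (×2), 11 (×7) on the real line; parties P₁ = {p₁ at 2, p₁' at 5}, P₂ = {p₂ at 7, p₂' at 11}, P₃ = {p₃ at 0}, P₄ = {p₄ at 12}; with each voter ranking candidates by increasing distance. In every nomination scheme either P₁ or P₂ has a Nash deviation. -/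
/-- Positions of the 22 voters: 5 voters at 2, 2 at 3, 6 at 5, 2 at 8.9, 7 at 11. -/
noncomputable def posV10 : Fin 22 → ℝ := fun v =>
  if v.val < 5 then 2 else if v.val < 7 then 3 else if v.val < 13 then 5
  else if v.val < 15 then 8.9 else 11

/-- Positions of the candidates: `p₁ = 0` at 2, `p₁' = 1` at 5, `p₂ = 2` at 7,
`p₂' = 3` at 11, `p₃ = 4` at 0, `p₄ = 5` at 12. -/
noncomputable def posC10 : Fin 6 → ℝ := fun c =>
  if c.val = 0 then 2 else if c.val = 1 then 5 else if c.val = 2 then 7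
  else if c.val = 3 then 11 else if c.val = 4 then 0 else 12

/-- Parties `P₁ = {p₁, p₁'}`, `P₂ = {p₂, p₂'}`, `P₃ = {p₃}`, `P₄ = {p₄}`. -/
def party10 : Fin 6 → ℕ := fun c =>
  if c.val ≤ 1 then 1 else if c.val ≤ 3 then 2 else if c.val = 4 then 3 else 4

/-- The party axis: the parties are ordered `P₃ < P₁ < P₂ < P₄` along the line,
so on the axis `P₃` gets position 1, `P₁` position 2, `P₂` position 3, `P₄`
position 4. -/
def partyAxis10 : ℕ → ℕ := fun n =>
  if n = 1 then 2 else if n = 2 then 3 else if n = 3 then 1 else 4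

/-- The 1-D Euclidean preferences: closer candidates are preferred. -/
def succ10 (v : Fin 22) (c c' : Fin 6) : Prop :=
  |posV10 v - posC10 c| < |posV10 v - posC10 c'|


/-! ### Auxiliary machinery: integer versions of the positions (scaled by 10) -/

/-- Integer version of the voter positions (scaled by `10`). -/
def iV10 : Fin 22 → ℤ := fun v =>
  if v.val < 5 then 20 else if v.val < 7 then 30 else if v.val < 13 then 50
  else if v.val < 15 then 89 else 110

/-- Integer version of the candidate positions (scaled by `10`). -/
def iC10 : Fin 6 → ℤ := fun c =>
  if c.val = 0 then 20 else if c.val = 1 then 50 else if c.val = 2 then 70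
  else if c.val = 3 then 110 else if c.val = 4 then 0 else 120

lemma posV10_eq (v : Fin 22) : posV10 v = (iV10 v : ℝ) / 10 := by
  unfold posV10 iV10; split_ifs <;> norm_num

lemma posC10_eq (c : Fin 6) : posC10 c = (iC10 c : ℝ) / 10 := by
  unfold posC10 iC10; split_ifs <;> norm_num

lemma dist10_eq (v : Fin 22) (c : Fin 6) :
    |posV10 v - posC10 c| = (|iV10 v - iC10 c| : ℤ) / (10 : ℝ) := by
  rw [posV10_eq, posC10_eq,
    show (iV10 v : ℝ) / 10 - (iC10 c : ℝ) / 10 = ((iV10 v - iC10 c : ℤ) : ℝ) / 10 by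
      push_cast; ring,
    abs_div, abs_of_nonneg (by norm_num : (0:ℝ) ≤ 10), Int.cast_abs]

lemma succ10_sq (v : Fin 22) (c c' : Fin 6) :
    succ10 v c c' ↔ (iV10 v - iC10 c) ^ 2 < (iV10 v - iC10 c') ^ 2 := by
  unfold succ10
  rw [dist10_eq, dist10_eq, div_lt_div_iff_of_pos_right (by norm_num : (0:ℝ) < 10),
    Int.cast_lt]
  exact sq_lt_sq.symm

/-- The candidate axis, by position: `p₃ < p₁ < p₁' < p₂ < p₂' < p₄`. -/
def ltc10 : Fin 6 → Fin 6 → Prop := fun a b =>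
  (![1, 2, 3, 4, 0, 5] : Fin 6 → ℕ) a < ![1, 2, 3, 4, 0, 5] b

instance : DecidableRel ltc10 := fun a b => inferInstanceAs (Decidable (_ < _))

lemma ltc10_sto : IsStrictTotalOrder (Fin 6) ltc10 :=
  { trichotomous := by decide, irrefl := by decide, trans := by decide }

lemma abs_lt_abs_iff' {x a b : ℝ} (h : a < b) :
    |x - a| < |x - b| ↔ 2 * x < a + b := by
  constructor
  · intro h'
    nlinarith [sq_abs (x - a), sq_abs (x - b), abs_nonneg (x - a), abs_nonneg (x - b)]
  · intro h'
    have h2 : (x - a) ^ 2 < (x - b) ^ 2 := by nlinarith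
    rw [← sq_abs (x - a), ← sq_abs (x - b)] at h2
    exact lt_of_pow_lt_pow_left₀ 2 (abs_nonneg _) h2

lemma iC10_mono : ∀ a b : Fin 6, ltc10 a b → iC10 a < iC10 b := by decide

lemma posC10_mono (a b : Fin 6) (h : ltc10 a b) : posC10 a < posC10 b := by
  rw [posC10_eq, posC10_eq]
  have : (iC10 a : ℝ) < iC10 b := by exact_mod_cast iC10_mono a b h
  linarith

lemma singlePeaked10 (v : Fin 22) : SinglePeakedWith (succ10 v) ltc10 := by
  intro a b c hab hbc hs
  have pab := posC10_mono a b hab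
  have pbc := posC10_mono b c hbc
  have pac := posC10_mono a c (ltc10_sto.trans _ _ _ hab hbc)
  have hs' : |posV10 v - posC10 a| < |posV10 v - posC10 b| := hs
  rw [abs_lt_abs_iff' pab] at hs'
  show |posV10 v - posC10 b| < |posV10 v - posC10 c|
  rw [abs_lt_abs_iff' pbc]
  linarith

lemma idist_inj : ∀ (v : Fin 22) (a b : Fin 6),
    (iV10 v - iC10 a) ^ 2 = (iV10 v - iC10 b) ^ 2 → a = b := by decide

lemma succ10_sto (v : Fin 22) : IsStrictTotalOrder (Fin 6) (succ10 v) :=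
  { trichotomous := by
      intro a b hab hba
      rcases lt_trichotomy (|posV10 v - posC10 a|) (|posV10 v - posC10 b|) with h | h | h
      · exact absurd h hab
      · show a = b
        apply idist_inj v
        rw [dist10_eq, dist10_eq] at h
        have h' : (|iV10 v - iC10 a| : ℤ) = |iV10 v - iC10 b| := by
          have h2 : ((|iV10 v - iC10 a| : ℤ) : ℝ) = ((|iV10 v - iC10 b| : ℤ) : ℝ) := by
            linarith
          exact_mod_cast h2
        exact (sq_eq_sq_iff_abs_eq_abs _ _).mpr h'
      · exact absurd h hba,
    irrefl := fun a => lt_irrefl _,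
    trans := fun a b c h1 h2 => lt_trans h1 h2 }

/-! ### Score computations -/

lemma votesFor10_eq {nom nom' : ℕ → Fin 6} (h : ∀ j ∈ Finset.Icc 1 4, nom j = nom' j)
    {i : ℕ} (hi : i ∈ Finset.Icc 1 4) :
    votesFor succ10 4 nom i = votesFor succ10 4 nom' i := by
  unfold votesFor
  ext v
  simp only [Set.mem_setOf_eq]
  constructor <;> intro hv i' hi' hne
  · rw [← h i hi, ← h i' hi']; exact hv i' hi' hne
  · rw [h i hi, h i' hi']; exact hv i' hi' hne

lemma score10_eq {nom nom' : ℕ → Fin 6} (h : ∀ j ∈ Finset.Icc 1 4, nom j = nom' j)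
    {i : ℕ} (hi : i ∈ Finset.Icc 1 4) :
    score succ10 4 nom i = score succ10 4 nom' i := by
  unfold score; rw [votesFor10_eq h hi]

lemma isWinner10_iff {nom nom' : ℕ → Fin 6} (h : ∀ j ∈ Finset.Icc 1 4, nom j = nom' j)
    {i : ℕ} (hi : i ∈ Finset.Icc 1 4) :
    IsWinner succ10 4 nom i ↔ IsWinner succ10 4 nom' i := by
  unfold IsWinner
  refine forall₂_congr fun i' hi' => ?_
  rw [score10_eq h hi', score10_eq h hi]

lemma score10_eval (nom : ℕ → Fin 6) (i : ℕ) :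
    score succ10 4 nom i = (Finset.univ.filter (fun v : Fin 22 =>
      ∀ i' ∈ Finset.Icc 1 4, i' ≠ i →
        (iV10 v - iC10 (nom i)) ^ 2 < (iV10 v - iC10 (nom i')) ^ 2)).card := by
  unfold score
  rw [← Set.ncard_coe_finset]
  congr 1
  ext v
  unfold votesFor
  simp only [Set.mem_setOf_eq, Finset.coe_filter, Finset.mem_univ, true_and, succ10_sq]

/-- Scheme A: `(p₁, p₂)`. -/
def nomA : ℕ → Fin 6 := fun i => if i = 1 then 0 else if i = 2 then 2 else if i = 3 then 4 else 5
/-- Scheme B: `(p₁', p₂)`. -/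
def nomB : ℕ → Fin 6 := fun i => if i = 1 then 1 else if i = 2 then 2 else if i = 3 then 4 else 5
/-- Scheme C: `(p₁', p₂')`. -/
def nomC : ℕ → Fin 6 := fun i => if i = 1 then 1 else if i = 2 then 3 else if i = 3 then 4 else 5
/-- Scheme D: `(p₁, p₂')`. -/
def nomD : ℕ → Fin 6 := fun i => if i = 1 then 0 else if i = 2 then 3 else if i = 3 then 4 else 5

lemma notWinA1 : ¬ IsWinner succ10 4 nomA 1 := by
  unfold IsWinner; simp only [score10_eval]; decide
lemma winA2 : IsWinner succ10 4 nomA 2 := by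
  unfold IsWinner; simp only [score10_eval]; decide
lemma winB1 : IsWinner succ10 4 nomB 1 := by
  unfold IsWinner; simp only [score10_eval]; decide
lemma notWinB2 : ¬ IsWinner succ10 4 nomB 2 := by
  unfold IsWinner; simp only [score10_eval]; decide
lemma notWinC1 : ¬ IsWinner succ10 4 nomC 1 := by
  unfold IsWinner; simp only [score10_eval]; decide
lemma winC2 : IsWinner succ10 4 nomC 2 := by
  unfold IsWinner; simp only [score10_eval]; decide
lemma winD1 : IsWinner succ10 4 nomD 1 := by
  unfold IsWinner; simp only [score10_eval]; decide
lemma notWinD2 : ¬ IsWinner succ10 4 nomD 2 := by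
  unfold IsWinner; simp only [score10_eval]; decide

lemma party10_cases : ∀ c : Fin 6,
    (party10 c = 1 → c = 0 ∨ c = 1) ∧ (party10 c = 2 → c = 2 ∨ c = 3) ∧
    (party10 c = 3 → c = 4) ∧ (party10 c = 4 → c = 5) := by decide

lemma main10 : ∀ nom : ℕ → Fin 6, ValidNom party10 4 nom →
    (∃ c' : Fin 6, NashDeviation party10 succ10 4 nom 1 c') ∨
    (∃ c' : Fin 6, NashDeviation party10 succ10 4 nom 2 c') := by
  intro nom hval
  have h1 := (party10_cases (nom 1)).1 (hval 1 (by decide))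
  have h2 := (party10_cases (nom 2)).2.1 (hval 2 (by decide))
  have h3 := (party10_cases (nom 3)).2.2.1 (hval 3 (by decide))
  have h4 := (party10_cases (nom 4)).2.2.2 (hval 4 (by decide))
  rcases h1 with h1 | h1 <;> rcases h2 with h2 | h2
  · -- scheme A = (p₁, p₂): P₁ deviates to p₁'
    have hA : ∀ j ∈ Finset.Icc 1 4, nom j = nomA j := by
      intro j hj
      rw [Finset.mem_Icc] at hj
      obtain ⟨hj1, hj2⟩ := hj
      interval_cases j <;> simp [h1, h2, h3, h4, nomA]
    have hA' : ∀ j ∈ Finset.Icc 1 4, Function.update nom 1 1 j = nomB j := by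
      intro j hj
      rw [Finset.mem_Icc] at hj
      obtain ⟨hj1, hj2⟩ := hj
      interval_cases j
      · simp [nomB]
      · rw [Function.update_of_ne (by norm_num)]; simpa [nomB] using h2
      · rw [Function.update_of_ne (by norm_num)]; simpa [nomB] using h3
      · rw [Function.update_of_ne (by norm_num)]; simpa [nomB] using h4
    refine Or.inl ⟨1, by decide, by rw [h1]; decide,
      by rw [isWinner10_iff hA (by decide)]; exact notWinA1,
      by rw [isWinner10_iff hA' (by decide)]; exact winB1⟩
  · -- scheme D = (p₁, p₂'): P₂ deviates to p₂
    have hD : ∀ j ∈ Finset.Icc 1 4, nom j = nomD j := by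
      intro j hj
      rw [Finset.mem_Icc] at hj
      obtain ⟨hj1, hj2⟩ := hj
      interval_cases j <;> simp [h1, h2, h3, h4, nomD]
    have hD' : ∀ j ∈ Finset.Icc 1 4, Function.update nom 2 2 j = nomA j := by
      intro j hj
      rw [Finset.mem_Icc] at hj
      obtain ⟨hj1, hj2⟩ := hj
      interval_cases j
      · rw [Function.update_of_ne (by norm_num)]; simpa [nomA] using h1
      · simp [nomA]
      · rw [Function.update_of_ne (by norm_num)]; simpa [nomA] using h3
      · rw [Function.update_of_ne (by norm_num)]; simpa [nomA] using h4
    refine Or.inr ⟨2, by decide, by rw [h2]; decide,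
      by rw [isWinner10_iff hD (by decide)]; exact notWinD2,
      by rw [isWinner10_iff hD' (by decide)]; exact winA2⟩
  · -- scheme B = (p₁', p₂): P₂ deviates to p₂'
    have hB : ∀ j ∈ Finset.Icc 1 4, nom j = nomB j := by
      intro j hj
      rw [Finset.mem_Icc] at hj
      obtain ⟨hj1, hj2⟩ := hj
      interval_cases j <;> simp [h1, h2, h3, h4, nomB]
    have hB' : ∀ j ∈ Finset.Icc 1 4, Function.update nom 2 3 j = nomC j := by
      intro j hj
      rw [Finset.mem_Icc] at hj
      obtain ⟨hj1, hj2⟩ := hj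
      interval_cases j
      · rw [Function.update_of_ne (by norm_num)]; simpa [nomC] using h1
      · simp [nomC]
      · rw [Function.update_of_ne (by norm_num)]; simpa [nomC] using h3
      · rw [Function.update_of_ne (by norm_num)]; simpa [nomC] using h4
    refine Or.inr ⟨3, by decide, by rw [h2]; decide,
      by rw [isWinner10_iff hB (by decide)]; exact notWinB2,
      by rw [isWinner10_iff hB' (by decide)]; exact winC2⟩
  · -- scheme C = (p₁', p₂'): P₁ deviates to p₁
    have hC : ∀ j ∈ Finset.Icc 1 4, nom j = nomC j := by
      intro j hj
      rw [Finset.mem_Icc] at hj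
      obtain ⟨hj1, hj2⟩ := hj
      interval_cases j <;> simp [h1, h2, h3, h4, nomC]
    have hC' : ∀ j ∈ Finset.Icc 1 4, Function.update nom 1 0 j = nomD j := by
      intro j hj
      rw [Finset.mem_Icc] at hj
      obtain ⟨hj1, hj2⟩ := hj
      interval_cases j
      · simp [nomD]
      · rw [Function.update_of_ne (by norm_num)]; simpa [nomD] using h2
      · rw [Function.update_of_ne (by norm_num)]; simpa [nomD] using h3
      · rw [Function.update_of_ne (by norm_num)]; simpa [nomD] using h4
    refine Or.inl ⟨0, by decide, by rw [h1]; decide,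
      by rw [isWinner10_iff hC (by decide)]; exact notWinC1,
      by rw [isWinner10_iff hC' (by decide)]; exact winD1⟩

/-- The 1-D Euclidean election with four parties of size at most 2 described
above has strict, single-peaked and party-aligned single-peaked preferences,
yet in every nomination scheme party `P₁` or party `P₂` has a Nash deviation;
hence no pure Nash equilibrium exists. -/
theorem euclidean_four_parties_no_equilibrium :
    (∀ v : Fin 22, IsStrictTotalOrder (Fin 6) (succ10 v)) ∧
    (∃ lt : Fin 6 → Fin 6 → Prop, IsStrictTotalOrder (Fin 6) lt ∧
      ∀ v : Fin 22, SinglePeakedWith (succ10 v) lt) ∧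
    (∀ v : Fin 22, PASPVote (fun c => partyAxis10 (party10 c)) (succ10 v)) ∧
    (∀ nom : ℕ → Fin 6, ValidNom party10 4 nom →
      (∃ c' : Fin 6, NashDeviation party10 succ10 4 nom 1 c') ∨
      (∃ c' : Fin 6, NashDeviation party10 succ10 4 nom 2 c')) ∧
    ¬ ∃ nom : ℕ → Fin 6, ValidNom party10 4 nom ∧ NashEq party10 succ10 4 nom := by
  refine ⟨succ10_sto, ⟨ltc10, ltc10_sto, singlePeaked10⟩,
    fun v => ⟨ltc10, ltc10_sto, by decide, singlePeaked10 v⟩, main10, ?_⟩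
  rintro ⟨nom, hval, heq⟩
  rcases main10 nom hval with ⟨c', hd⟩ | ⟨c', hd⟩
  · exact heq 1 (by decide) c' hd
  · exact heq 2 (by decide) c' hd
end

section
/- Given a party-aligned single-peaked profile with party axis P_1 < ... < P_k, partition the voters into sets V^{P_i} (voters who vote for P_i's nominee in every nomination scheme, equivalently whose top |P_i| candidates are exactly P_i) and V^{(P_i,P_{i+1})} (remaining voters who always vote for the nominee of P_i or of P_{i+1}). Then these sets are pairwise disjoint and their union is the entire voter set V. -/
/-- Voters who vote for party `i`'s nominee in every nomination scheme. -/
def AlwaysFor {C V : Type*} (party : C → ℕ) (succ : V → C → C → Prop)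
    (k i : ℕ) : Set V :=
  {v | ∀ nom : ℕ → C, ValidNom party k nom → v ∈ votesFor succ k nom i}

/-- Voters, not in `AlwaysFor i` or `AlwaysFor (i+1)`, who always vote for the
nominee of party `i` or of party `i+1`. -/
def BetweenFor {C V : Type*} (party : C → ℕ) (succ : V → C → C → Prop)
    (k i : ℕ) : Set V :=
  {v | v ∉ AlwaysFor party succ k i ∧ v ∉ AlwaysFor party succ k (i + 1) ∧
    ∀ nom : ℕ → C, ValidNom party k nom →
      (v ∈ votesFor succ k nom i ∨ v ∈ votesFor succ k nom (i + 1))}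

/-- The voter set `V_{≤ i}`. -/
def Vle {C V : Type*} (party : C → ℕ) (succ : V → C → C → Prop)
    (k i : ℕ) : Set V :=
  (⋃ j ∈ Finset.Icc 1 i, AlwaysFor party succ k j) ∪
    (⋃ j ∈ Finset.Icc 1 (i - 1), BetweenFor party succ k j)

/-- The voter set `V_{≥ i}`. -/
def Vge {C V : Type*} (party : C → ℕ) (succ : V → C → C → Prop)
    (k i : ℕ) : Set V :=
  (⋃ j ∈ Finset.Icc i k, AlwaysFor party succ k j) ∪
    (⋃ j ∈ Finset.Icc i (k - 1), BetweenFor party succ k j)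

/-- `nom` extends the partial nomination scheme `cs` given on positions `1,…,i`. -/
def Extends {C : Type*} (i : ℕ) (cs nom : ℕ → C) : Prop :=
  ∀ j ∈ Finset.Icc 1 i, nom j = cs j

/-- `nom` extends the partial nomination scheme `cs` given on positions `i,…,k`. -/
def ExtendsR {C : Type*} (i k : ℕ) (cs nom : ℕ → C) : Prop :=
  ∀ j ∈ Finset.Icc i k, nom j = cs j

/-- Number of votes obtained by party `j`'s nominee from the voters in `W`. -/
noncomputable def votesFrom {C V : Type*} (W : Set V) (succ : V → C → C → Prop)
    (k : ℕ) (nom : ℕ → C) (j : ℕ) : ℕ :=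
  (W ∩ votesFor succ k nom j).ncard

/-- A left-feasible partial nomination scheme for `i` (with target score `sstar`):
condition (α) plus the no-deviation condition (β). -/
def LeftFeasible {C V : Type*} (party : C → ℕ) (succ : V → C → C → Prop)
    (k sstar i : ℕ) (cs : ℕ → C) : Prop :=
  (∀ j ∈ Finset.Icc 1 i, party (cs j) = j) ∧
  ∀ nom : ℕ → C, ValidNom party k nom → Extends i cs nom →
    ∀ j ∈ Finset.Icc 1 (i - 1),
      votesFrom (Vle party succ k i) succ k nom j ≤ sstar ∧
      (votesFrom (Vle party succ k i) succ k nom j < sstar →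
        ∀ c' : C, party c' = j → c' ≠ cs j →
          votesFrom (Vle party succ k i) succ k (Function.update nom j c') j < sstar)

/-- A right-feasible partial nomination scheme for `i`. -/
def RightFeasible {C V : Type*} (party : C → ℕ) (succ : V → C → C → Prop)
    (k sstar i : ℕ) (cs : ℕ → C) : Prop :=
  (∀ j ∈ Finset.Icc i k, party (cs j) = j) ∧
  ∀ nom : ℕ → C, ValidNom party k nom → ExtendsR i k cs nom →
    ∀ j ∈ Finset.Icc (i + 1) k,
      votesFrom (Vge party succ k i) succ k nom j ≤ sstar ∧
      (votesFrom (Vge party succ k i) succ k nom j < sstar →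
        ∀ c' : C, party c' = j → c' ≠ cs j →
          votesFrom (Vge party succ k i) succ k (Function.update nom j c') j < sstar)

/-- A left-PP-feasible partial nomination scheme for `i`: only condition (α). -/
def LeftPPFeasible {C V : Type*} (party : C → ℕ) (succ : V → C → C → Prop)
    (k sstar i : ℕ) (cs : ℕ → C) : Prop :=
  (∀ j ∈ Finset.Icc 1 i, party (cs j) = j) ∧
  ∀ nom : ℕ → C, ValidNom party k nom → Extends i cs nom →
    ∀ j ∈ Finset.Icc 1 (i - 1),
      votesFrom (Vle party succ k i) succ k nom j ≤ sstar

/-- A right-PP-feasible partial nomination scheme for `i`. -/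
def RightPPFeasible {C V : Type*} (party : C → ℕ) (succ : V → C → C → Prop)
    (k sstar i : ℕ) (cs : ℕ → C) : Prop :=
  (∀ j ∈ Finset.Icc i k, party (cs j) = j) ∧
  ∀ nom : ℕ → C, ValidNom party k nom → ExtendsR i k cs nom →
    ∀ j ∈ Finset.Icc (i + 1) k,
      votesFrom (Vge party succ k i) succ k nom j ≤ sstar

/-- The pair `(s, s')` is left-viable for the candidate pair `(c, c')` of
parties `P_{i-1}` and `P_i`. -/
def LeftViablePair {C V : Type*} (party : C → ℕ) (succ : V → C → C → Prop)
    (k sstar i : ℕ) (c c' : C) (s s' : ℕ) : Prop :=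
  ∃ cs : ℕ → C, LeftFeasible party succ k sstar i cs ∧
    cs (i - 1) = c ∧ cs i = c' ∧
    ∀ nom : ℕ → C, ValidNom party k nom → Extends i cs nom →
      votesFrom (Vle party succ k i) succ k nom (i - 1) = s ∧
      votesFrom (Vle party succ k i) succ k nom i = s'

/-- `s` is a left-viable score for candidate `c` of party `P_i`. -/
def LeftViableScore {C V : Type*} (party : C → ℕ) (succ : V → C → C → Prop)
    (k sstar i : ℕ) (c : C) (s : ℕ) : Prop :=
  ∃ cs : ℕ → C, LeftFeasible party succ k sstar i cs ∧ cs i = c ∧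
    ∀ nom : ℕ → C, ValidNom party k nom → Extends i cs nom →
      votesFrom (Vle party succ k i) succ k nom i = s

/-- `s` is a right-viable score for candidate `c` of party `P_i`. -/
def RightViableScore {C V : Type*} (party : C → ℕ) (succ : V → C → C → Prop)
    (k sstar i : ℕ) (c : C) (s : ℕ) : Prop :=
  ∃ cs : ℕ → C, RightFeasible party succ k sstar i cs ∧ cs i = c ∧
    ∀ nom : ℕ → C, ValidNom party k nom → ExtendsR i k cs nom →
      votesFrom (Vge party succ k i) succ k nom i = s

/-- `s` is a left-PP-viable score for candidate `c` of party `P_i`. -/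
def LeftPPViableScore {C V : Type*} (party : C → ℕ) (succ : V → C → C → Prop)
    (k sstar i : ℕ) (c : C) (s : ℕ) : Prop :=
  ∃ cs : ℕ → C, LeftPPFeasible party succ k sstar i cs ∧ cs i = c ∧
    ∀ nom : ℕ → C, ValidNom party k nom → Extends i cs nom →
      votesFrom (Vle party succ k i) succ k nom i = s

/-- `s` is a right-PP-viable score for candidate `c` of party `P_i`. -/
def RightPPViableScore {C V : Type*} (party : C → ℕ) (succ : V → C → C → Prop)
    (k sstar i : ℕ) (c : C) (s : ℕ) : Prop :=
  ∃ cs : ℕ → C, RightPPFeasible party succ k sstar i cs ∧ cs i = c ∧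
    ∀ nom : ℕ → C, ValidNom party k nom → ExtendsR i k cs nom →
      votesFrom (Vge party succ k i) succ k nom i = s

set_option linter.unusedSectionVars false

section Helper
variable {C : Type*} [Fintype C]

lemma sto_asymm {r : C → C → Prop} (h : IsStrictTotalOrder C r) {a b : C}
    (hab : r a b) (hba : r b a) : False :=
  h.irrefl a (h.trans a b a hab hba)

lemma sto_cmp {r : C → C → Prop} (h : IsStrictTotalOrder C r) {a b : C}
    (hne : a ≠ b) (hnb : ¬ r b a) : r a b := by
  rcases (haveI := h; trichotomous_of r a b) with h1 | h1 | h1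
  · exact h1
  · exact absurd h1 hne
  · exact absurd h1 hnb

lemma sto_max {r : C → C → Prop} (h : IsStrictTotalOrder C r)
    (s : Set C) (hs : s.Nonempty) : ∃ m ∈ s, ∀ x ∈ s, ¬ r x m := by
  haveI := h
  have hwf : WellFounded r := Finite.wellFounded_of_trans_of_irrefl r
  exact hwf.has_min s hs

lemma voter_key {k : ℕ} (party : C → ℕ)
    (hpr : ∀ c, party c ∈ Finset.Icc 1 k)
    {r : C → C → Prop} (hsto : IsStrictTotalOrder C r)
    (hP : PASPVote party r)
    {nomA nomB : ℕ → C} (hA : ValidNom party k nomA) (hB : ValidNom party k nomB)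
    {a b : ℕ} (ha : a ∈ Finset.Icc 1 k) (hb : b ∈ Finset.Icc 1 k)
    (hvA : ∀ i' ∈ Finset.Icc 1 k, i' ≠ a → r (nomA a) (nomA i'))
    (hvB : ∀ i' ∈ Finset.Icc 1 k, i' ≠ b → r (nomB b) (nomB i'))
    (hab : a ≤ b) : b ≤ a + 1 := by
  obtain ⟨lt, hlt, hmono, hsp⟩ := hP
  obtain ⟨p, -, hpmax⟩ := sto_max hsto Set.univ ⟨nomA a, trivial⟩
  have hpeak : ∀ x : C, x ≠ p → r p x := fun x hx =>
    sto_cmp hsto (Ne.symm hx) (hpmax x trivial)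
  have partylt : ∀ c c' : C, party c < party c' → lt c c' := by
    intro c c' hcc
    rcases (haveI := hlt; trichotomous_of lt c c') with h1 | h1 | h1
    · exact h1
    · exact absurd h1 (fun h => by subst h; omega)
    · exact absurd (hmono c' c h1) (by omega)
  have leftinc : ∀ x y : C, lt x y → (y = p ∨ lt y p) → r y x := by
    intro x y hxy hyp
    have hxny : x ≠ y := fun h => hlt.irrefl y (h ▸ hxy)
    rcases hyp with h1 | h1
    · subst h1; exact hpeak x hxny
    · refine sto_cmp hsto (Ne.symm hxny) (fun hr => ?_)
      have hynp : y ≠ p := fun h => by rw [h] at h1; exact hlt.irrefl p h1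
      exact sto_asymm hsto (hsp x y p hxy h1 hr) (hpeak y hynp)
  have rightdec : ∀ y z : C, lt p y → lt y z → r y z := by
    intro y z h1 h2
    have hynp : y ≠ p := fun h => by rw [h] at h1; exact hlt.irrefl p h1
    exact hsp p y z h1 h2 (hpeak y hynp)
  -- upper claim: any vote c satisfies party p ≤ c + 1
  have claimU : ∀ (nom : ℕ → C), ValidNom party k nom → ∀ c ∈ Finset.Icc 1 k,
      (∀ i' ∈ Finset.Icc 1 k, i' ≠ c → r (nom c) (nom i')) → party p ≤ c + 1 := by
    intro nom hnom c hc hv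
    by_contra hcon
    push_neg at hcon
    have hpk := Finset.mem_Icc.mp (hpr p)
    simp only [Finset.mem_Icc] at hc
    have hm : c + 1 ∈ Finset.Icc 1 k := Finset.mem_Icc.mpr (by omega)
    have l1 : lt (nom c) (nom (c+1)) :=
      partylt _ _ (by rw [hnom _ (Finset.mem_Icc.mpr (by omega)), hnom _ hm]; omega)
    have l2 : lt (nom (c+1)) p := partylt _ _ (by rw [hnom _ hm]; omega)
    exact sto_asymm hsto (hv (c+1) hm (by omega)) (leftinc _ _ l1 (Or.inr l2))
  have claimD : ∀ (nom : ℕ → C), ValidNom party k nom → ∀ c ∈ Finset.Icc 1 k,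
      (∀ i' ∈ Finset.Icc 1 k, i' ≠ c → r (nom c) (nom i')) → c ≤ party p + 1 := by
    intro nom hnom c hc hv
    by_contra hcon
    push_neg at hcon
    have hpk := Finset.mem_Icc.mp (hpr p)
    simp only [Finset.mem_Icc] at hc
    have hm : party p + 1 ∈ Finset.Icc 1 k := Finset.mem_Icc.mpr (by omega)
    have l1 : lt p (nom (party p + 1)) := partylt _ _ (by rw [hnom _ hm]; omega)
    have l2 : lt (nom (party p + 1)) (nom c) :=
      partylt _ _ (by rw [hnom _ hm, hnom _ (Finset.mem_Icc.mpr (by omega))]; omega)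
    exact sto_asymm hsto (hv _ hm (by omega)) (rightdec _ _ l1 l2)
  -- can't straddle the peak party
  have claim3 : a < party p → party p < b → False := by
    intro h1 h2
    have hπm : party p ∈ Finset.Icc 1 k := hpr p
    have hxX : r (nomA a) (nomA (party p)) := hvA _ hπm (by omega)
    have hyW : r (nomB b) (nomB (party p)) := hvB _ hπm (by omega)
    have hxp : nomA a ≠ p := fun h => by have := hA _ ha; rw [h] at this; omega
    have hpX : lt p (nomA (party p)) := by
      rcases (haveI := hlt; trichotomous_of lt p (nomA (party p))) with h3 | h3 | h3
      · exact h3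
      · exact absurd (h3 ▸ hpeak (nomA a) hxp) (fun hh => sto_asymm hsto hxX hh)
      · have lxX : lt (nomA a) (nomA (party p)) :=
          partylt _ _ (by rw [hA _ ha, hA _ hπm]; omega)
        exact (sto_asymm hsto hxX (leftinc _ _ lxX (Or.inr h3))).elim
    have hWp : nomB (party p) = p ∨ lt (nomB (party p)) p := by
      rcases (haveI := hlt; trichotomous_of lt (nomB (party p)) p) with h3 | h3 | h3
      · exact Or.inr h3
      · exact Or.inl h3
      · have lWy : lt (nomB (party p)) (nomB b) :=
          partylt _ _ (by rw [hB _ hπm, hB _ hb]; omega)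
        exact (sto_asymm hsto hyW (rightdec _ _ h3 lWy)).elim
    have rWx : r (nomB (party p)) (nomA a) :=
      leftinc _ _ (partylt _ _ (by rw [hA _ ha, hB _ hπm]; omega)) hWp
    have rXy : r (nomA (party p)) (nomB b) :=
      rightdec _ _ hpX (partylt _ _ (by rw [hA _ hπm, hB _ hb]; omega))
    exact sto_asymm hsto (hsto.trans _ _ _ hxX rXy) (hsto.trans _ _ _ hyW rWx)
  by_contra hcon
  push_neg at hcon
  have h1 := claimU nomA hA a ha hvA
  have h2 := claimD nomB hB b hb hvB
  exact claim3 (by omega) (by omega)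

end Helper

/-- For a party-aligned single-peaked profile, the voter sets `V^{P_i}`
(`AlwaysFor i`, `i ∈ {1,…,k}`) and `V^{(P_i,P_{i+1})}` (`BetweenFor i`,
`i ∈ {1,…,k-1}`) are pairwise disjoint and their union is the whole voter set. -/
theorem voter_partition
    {C V : Type*} [Fintype C] [Fintype V] {k : ℕ} (hk : 1 ≤ k)
    (party : C → ℕ) (hpr : ∀ c : C, party c ∈ Finset.Icc 1 k)
    (hne : ∀ i ∈ Finset.Icc 1 k, ∃ c : C, party c = i)
    (succ : V → C → C → Prop) (hsto : ∀ v : V, IsStrictTotalOrder C (succ v))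
    (hPASP : ∀ v : V, PASPVote party (succ v)) :
    (∀ i ∈ Finset.Icc 1 k, ∀ j ∈ Finset.Icc 1 k, i ≠ j →
      AlwaysFor party succ k i ∩ AlwaysFor party succ k j = ∅) ∧
    (∀ i ∈ Finset.Icc 1 k, ∀ j ∈ Finset.Icc 1 (k - 1),
      AlwaysFor party succ k i ∩ BetweenFor party succ k j = ∅) ∧
    (∀ i ∈ Finset.Icc 1 (k - 1), ∀ j ∈ Finset.Icc 1 (k - 1), i ≠ j →
      BetweenFor party succ k i ∩ BetweenFor party succ k j = ∅) ∧
    (∀ v : V, (∃ i ∈ Finset.Icc 1 k, v ∈ AlwaysFor party succ k i) ∨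
      (∃ i ∈ Finset.Icc 1 (k - 1), v ∈ BetweenFor party succ k i)) := by
  classical
  obtain ⟨c₁, hc₁⟩ := hne 1 (Finset.mem_Icc.mpr ⟨le_refl 1, hk⟩)
  haveI : Nonempty C := ⟨c₁⟩
  obtain ⟨nom₀, hnom₀⟩ : ∃ nom : ℕ → C, ValidNom party k nom := by
    refine ⟨fun i => if h : ∃ c : C, party c = i then h.choose else c₁, ?_⟩
    intro i hi
    simp only [dif_pos (hne i hi)]
    exact (hne i hi).choose_spec
  have conflict : ∀ (v : V) (nom : ℕ → C), ValidNom party k nom →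
      ∀ i j, i ∈ Finset.Icc 1 k → j ∈ Finset.Icc 1 k → i ≠ j →
      v ∈ votesFor succ k nom i → v ∈ votesFor succ k nom j → False := by
    intro v nom hnom i j hi hj hij hvi hvj
    exact sto_asymm (hsto v) (hvi j hj (Ne.symm hij)) (hvj i hi hij)
  have exv : ∀ (v : V) (nom : ℕ → C), ValidNom party k nom →
      ∃ j ∈ Finset.Icc 1 k, v ∈ votesFor succ k nom j := by
    intro v nom hnom
    obtain ⟨m, hm, hmax⟩ := sto_max (hsto v)
      {c | ∃ i ∈ Finset.Icc 1 k, nom i = c}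
      ⟨nom 1, 1, Finset.mem_Icc.mpr ⟨le_refl 1, hk⟩, rfl⟩
    obtain ⟨j, hj, rfl⟩ := hm
    refine ⟨j, hj, ?_⟩
    intro i' hi' hne'
    have hnn : nom i' ≠ nom j := fun h => hne' (by rw [← hnom _ hi', h, hnom _ hj])
    exact sto_cmp (hsto v) (Ne.symm hnn) (hmax (nom i') ⟨i', hi', rfl⟩)
  have key : ∀ (v : V) (nomA nomB : ℕ → C), ValidNom party k nomA → ValidNom party k nomB →
      ∀ a b, a ∈ Finset.Icc 1 k → b ∈ Finset.Icc 1 k →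
      v ∈ votesFor succ k nomA a → v ∈ votesFor succ k nomB b → a ≤ b → b ≤ a + 1 := by
    intro v nomA nomB hA hB a b ha hb hva hvb hab
    exact voter_key party hpr (hsto v) (hPASP v) hA hB ha hb hva hvb hab
  refine ⟨?_, ?_, ?_, ?_⟩
  · intro i hi j hj hij
    rw [Set.eq_empty_iff_forall_notMem]
    rintro v ⟨hvi, hvj⟩
    exact conflict v nom₀ hnom₀ i j hi hj hij (hvi nom₀ hnom₀) (hvj nom₀ hnom₀)
  · intro i hi j hj
    rw [Set.eq_empty_iff_forall_notMem]
    rintro v ⟨hvi, hnj, hnj1, hall⟩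
    simp only [Finset.mem_Icc] at hi hj
    have hjm : j ∈ Finset.Icc 1 k := Finset.mem_Icc.mpr (by omega)
    have hjm1 : j + 1 ∈ Finset.Icc 1 k := Finset.mem_Icc.mpr (by omega)
    by_cases h1 : i = j
    · exact hnj (h1 ▸ hvi)
    by_cases h2 : i = j + 1
    · exact hnj1 (h2 ▸ hvi)
    rcases hall nom₀ hnom₀ with h | h
    · exact conflict v nom₀ hnom₀ i j (Finset.mem_Icc.mpr (by omega)) hjm h1
        (hvi nom₀ hnom₀) h
    · exact conflict v nom₀ hnom₀ i (j+1) (Finset.mem_Icc.mpr (by omega)) hjm1 h2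
        (hvi nom₀ hnom₀) h
  · have main : ∀ i j, i ∈ Finset.Icc 1 (k-1) → j ∈ Finset.Icc 1 (k-1) → i < j →
        ∀ v : V, v ∈ BetweenFor party succ k i → v ∈ BetweenFor party succ k j → False := by
      intro i j hi hj hij v hvi hvj
      obtain ⟨hni, hni1, halli⟩ := hvi
      obtain ⟨hnj, hnj1, hallj⟩ := hvj
      simp only [Finset.mem_Icc] at hi hj
      by_cases hcase : j = i + 1
      · subst hcase
        apply hni1
        intro nom hnom
        rcases halli nom hnom with h | h
        · rcases hallj nom hnom with h' | h'
          · exact h'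
          · exact (conflict v nom hnom i (i+2) (Finset.mem_Icc.mpr (by omega))
              (Finset.mem_Icc.mpr (by omega)) (by omega) h h').elim
        · exact h
      · rcases halli nom₀ hnom₀ with h | h <;> rcases hallj nom₀ hnom₀ with h' | h' <;>
          exact conflict v nom₀ hnom₀ _ _ (Finset.mem_Icc.mpr (by omega))
            (Finset.mem_Icc.mpr (by omega)) (by omega) h h'
    intro i hi j hj hij
    rw [Set.eq_empty_iff_forall_notMem]
    rintro v ⟨hvi, hvj⟩
    rcases hij.lt_or_gt with h | h
    · exact main i j hi hj h v hvi hvj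
    · exact main j i hj hi h v hvj hvi
  · intro v
    obtain ⟨j₀, hj₀, hv₀⟩ := exv v nom₀ hnom₀
    by_cases hall : ∀ nom : ℕ → C, ValidNom party k nom → v ∈ votesFor succ k nom j₀
    · exact Or.inl ⟨j₀, hj₀, hall⟩
    · push_neg at hall
      obtain ⟨nom₁, hnom₁, hnv₁⟩ := hall
      obtain ⟨j₁, hj₁, hv₁⟩ := exv v nom₁ hnom₁
      have hne01 : j₁ ≠ j₀ := fun h => hnv₁ (h ▸ hv₁)
      have pairb : ∀ (nomA nomB : ℕ → C), ValidNom party k nomA → ValidNom party k nomB →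
          ∀ a b, a ∈ Finset.Icc 1 k → b ∈ Finset.Icc 1 k →
          v ∈ votesFor succ k nomA a → v ∈ votesFor succ k nomB b →
          (a ≤ b ∧ b ≤ a + 1) ∨ (b ≤ a ∧ a ≤ b + 1) := by
        intro nomA nomB hA hB a b ha hb hva hvb
        rcases le_total a b with h | h
        · exact Or.inl ⟨h, key v nomA nomB hA hB a b ha hb hva hvb h⟩
        · exact Or.inr ⟨h, key v nomB nomA hB hA b a hb ha hvb hva h⟩
      obtain ⟨t, nomT, nomS, hnomT, hnomS, htm, hts, hvt, hvt1⟩ :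
          ∃ (t : ℕ) (nomT nomS : ℕ → C), ValidNom party k nomT ∧ ValidNom party k nomS ∧
            t ∈ Finset.Icc 1 k ∧ t + 1 ∈ Finset.Icc 1 k ∧
            v ∈ votesFor succ k nomT t ∧ v ∈ votesFor succ k nomS (t + 1) := by
        rcases pairb nom₀ nom₁ hnom₀ hnom₁ j₀ j₁ hj₀ hj₁ hv₀ hv₁ with ⟨h1, h2⟩ | ⟨h1, h2⟩
        · have hh : j₁ = j₀ + 1 := by omega
          exact ⟨j₀, nom₀, nom₁, hnom₀, hnom₁, hj₀, hh ▸ hj₁, hv₀, hh ▸ hv₁⟩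
        · have hh : j₀ = j₁ + 1 := by omega
          exact ⟨j₁, nom₁, nom₀, hnom₁, hnom₀, hj₁, hh ▸ hj₀, hv₁, hh ▸ hv₀⟩
      refine Or.inr ⟨t, ?_, ?_, ?_, ?_⟩
      · simp only [Finset.mem_Icc] at htm hts ⊢
        omega
      · intro hmem
        exact conflict v nomS hnomS t (t+1) htm hts (by omega) (hmem nomS hnomS) hvt1
      · intro hmem
        exact conflict v nomT hnomT t (t+1) htm hts (by omega) hvt (hmem nomT hnomT)
      · intro nom hnom
        obtain ⟨j, hj, hvj⟩ := exv v nom hnom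
        have d1 := pairb nom nomT hnom hnomT j t hj htm hvj hvt
        have d2 := pairb nom nomS hnom hnomS j (t+1) hj hts hvj hvt1
        have hjt : j = t ∨ j = t + 1 := by
          rcases d1 with ⟨h1, h2⟩ | ⟨h1, h2⟩ <;> rcases d2 with ⟨h3, h4⟩ | ⟨h3, h4⟩ <;> omega
        rcases hjt with h | h
        · exact Or.inl (h ▸ hvj)
        · exact Or.inr (h ▸ hvj)
end

section
/- A voter v votes for the nominee of party P_i in every nomination scheme (irrespective of which candidates are nominated by any party) if and only if the top |P_i| candidates in v's strict preference order are exactly the candidates of P_i. -/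
/-- A voter `v` votes for the nominee of party `P_i` in every nomination scheme
if and only if the top `|P_i|` candidates of `v`'s preference order are exactly
the candidates of `P_i`, i.e. `v` prefers every candidate of `P_i` to every
candidate outside `P_i`. -/
theorem always_votes_iff_top_party
    {C V : Type*} [Fintype C] {k : ℕ}
    (party : C → ℕ) (hpr : ∀ c : C, party c ∈ Finset.Icc 1 k)
    (hne : ∀ i ∈ Finset.Icc 1 k, ∃ c : C, party c = i)
    (succ : V → C → C → Prop) (hsto : ∀ v : V, IsStrictTotalOrder C (succ v))
    (i : ℕ) (hi : i ∈ Finset.Icc 1 k) (v : V) :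
    (∀ nom : ℕ → C, ValidNom party k nom → v ∈ votesFor succ k nom i) ↔
      (∀ c c' : C, party c = i → party c' ≠ i → succ v c c') := by
  classical
  constructor
  · intro H c c' hc hc'
    set j := party c' with hj
    have hjm : j ∈ Finset.Icc 1 k := hpr c'
    let nom : ℕ → C := fun m =>
      if m = i then c else if m = j then c'
      else if hm : m ∈ Finset.Icc 1 k then Classical.choose (hne m hm) else c
    have hvalid : ValidNom party k nom := by
      intro m hm
      by_cases h1 : m = i
      · have : nom m = c := by simp only [nom, if_pos h1]
        rw [this, hc, h1]
      · by_cases h2 : m = j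
        · have : nom m = c' := by simp only [nom, if_neg h1, if_pos h2]
          rw [this, ← hj, h2]
        · simp only [nom, if_neg h1, if_neg h2, dif_pos hm]
          exact Classical.choose_spec (hne m hm)
    have hvote := H nom hvalid j hjm hc'
    simpa only [nom, if_pos rfl, if_neg hc', ↓reduceIte] using hvote
  · intro H nom hnom i' hi' hne'
    exact H _ _ (hnom i hi) (by rw [hnom i' hi']; exact hne')
end

section
/- Fix a target score s* and parties P_1, P_2 adjacent at the start of the party axis. For a candidate pair (c₁, c₂) ∈ P₁ × P₂, define s₁ = |V^{P₁}| + |{v ∈ V^{(P₁,P₂)} : c₁ ≻_v c₂}| and s₂ = |V^{P₂}| + |{v ∈ V^{(P₁,P₂)} : c₂ ≻_v c₁}|. Then (s₁, s₂) is left-viable for (c₁, c₂) if and only if either s₁ = s*, or s₁ < s* and there is no c₁' ∈ P₁ with |V^{P₁}| + |{v ∈ V^{(P₁,P₂)} : c₁' ≻_v c₂}| ≥ s*. -/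
/-- Base case of the dynamic programme: for a candidate pair
`(c₁, c₂) ∈ P₁ × P₂`, the score pair `(s₁, s₂)` determined by the formulas
`s₁ = |V^{P₁}| + |{v ∈ V^{(P₁,P₂)} : c₁ ≻_v c₂}|` and
`s₂ = |V^{P₂}| + |{v ∈ V^{(P₁,P₂)} : c₂ ≻_v c₁}|` is left-viable for `(c₁, c₂)`
iff `s₁ = s*`, or `s₁ < s*` and no `c₁' ∈ P₁` reaches at least `s*` votes. -/
theorem viable_scorepair_base
    {C V : Type*} [Fintype C] [Fintype V] {k : ℕ} (hk : 2 ≤ k)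
    (party : C → ℕ) (hpr : ∀ c : C, party c ∈ Finset.Icc 1 k)
    (hne : ∀ i ∈ Finset.Icc 1 k, ∃ c : C, party c = i)
    (succ : V → C → C → Prop) (hsto : ∀ v : V, IsStrictTotalOrder C (succ v))
    (hPASP : ∀ v : V, PASPVote party (succ v))
    (sstar : ℕ) (c1 c2 : C) (hc1 : party c1 = 1) (hc2 : party c2 = 2)
    (s1 s2 : ℕ)
    (hs1 : s1 = (AlwaysFor party succ k 1).ncard +
      {v ∈ BetweenFor party succ k 1 | succ v c1 c2}.ncard)
    (hs2 : s2 = (AlwaysFor party succ k 2).ncard +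
      {v ∈ BetweenFor party succ k 1 | succ v c2 c1}.ncard) :
    LeftViablePair party succ k sstar 2 c1 c2 s1 s2 ↔
      (s1 = sstar ∨ (s1 < sstar ∧ ¬ ∃ c' : C, party c' = 1 ∧
        sstar ≤ (AlwaysFor party succ k 1).ncard +
          {v ∈ BetweenFor party succ k 1 | succ v c' c2}.ncard)) := by
  classical
  have h1k : (1:ℕ) ∈ Finset.Icc 1 k := by simp only [Finset.mem_Icc]; omega
  have h2k : (2:ℕ) ∈ Finset.Icc 1 k := by simp only [Finset.mem_Icc]; omega
  have hasymm : ∀ (v : V) (a b : C), succ v a b → succ v b a → False := by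
    intro v a b hab hba
    haveI := hsto v
    exact irrefl a (_root_.trans hab hba)
  -- disjointness of votesFor 1 and votesFor 2
  have hdisj : ∀ nom : ℕ → C, ValidNom party k nom → ∀ v : V,
      v ∈ votesFor succ k nom 1 → v ∈ votesFor succ k nom 2 → False := by
    intro nom hval v hv1 hv2
    exact hasymm v _ _ (hv1 2 h2k (by decide)) (hv2 1 h1k (by decide))
  have hVle : Vle party succ k 2 =
      AlwaysFor party succ k 1 ∪ AlwaysFor party succ k 2 ∪ BetweenFor party succ k 1 := by
    have e1 : Finset.Icc 1 2 = ({1, 2} : Finset ℕ) := by decide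
    have e2 : Finset.Icc 1 (2 - 1) = ({1} : Finset ℕ) := by decide
    simp [Vle, e1, e2]
  -- key counting lemma for position 1
  have key1 : ∀ a : C, ∀ nom : ℕ → C, ValidNom party k nom → nom 1 = a → nom 2 = c2 →
      votesFrom (Vle party succ k 2) succ k nom 1 =
        (AlwaysFor party succ k 1).ncard +
          {v ∈ BetweenFor party succ k 1 | succ v a c2}.ncard := by
    intro a nom hval h1 h2
    have hset : Vle party succ k 2 ∩ votesFor succ k nom 1 =
        AlwaysFor party succ k 1 ∪ {v ∈ BetweenFor party succ k 1 | succ v a c2} := by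
      ext v
      simp only [hVle, Set.mem_inter_iff, Set.mem_union, Set.mem_setOf_eq]
      constructor
      · rintro ⟨(hA1 | hA2) | hB, hvote⟩
        · exact Or.inl hA1
        · exact absurd (hA2 nom hval) (fun h2' => hdisj nom hval v hvote h2')
        · refine Or.inr ⟨hB, ?_⟩
          have := hvote 2 h2k (by decide)
          rwa [h1, h2] at this
      · rintro (hA1 | ⟨hB, hsucc⟩)
        · exact ⟨Or.inl (Or.inl hA1), hA1 nom hval⟩
        · refine ⟨Or.inr hB, ?_⟩
          rcases hB.2.2 nom hval with hv1 | hv2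
          · exact hv1
          · exfalso
            have := hv2 1 h1k (by decide)
            rw [h1, h2] at this
            exact hasymm v _ _ hsucc this
    have hd : Disjoint (AlwaysFor party succ k 1)
        {v ∈ BetweenFor party succ k 1 | succ v a c2} := by
      rw [Set.disjoint_left]
      intro v hv1 hv2
      exact hv2.1.1 hv1
    rw [votesFrom, hset, Set.ncard_union_eq hd (Set.toFinite _) (Set.toFinite _)]
  -- key counting lemma for position 2
  have key2 : ∀ nom : ℕ → C, ValidNom party k nom → nom 1 = c1 → nom 2 = c2 →
      votesFrom (Vle party succ k 2) succ k nom 2 =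
        (AlwaysFor party succ k 2).ncard +
          {v ∈ BetweenFor party succ k 1 | succ v c2 c1}.ncard := by
    intro nom hval h1 h2
    have hset : Vle party succ k 2 ∩ votesFor succ k nom 2 =
        AlwaysFor party succ k 2 ∪ {v ∈ BetweenFor party succ k 1 | succ v c2 c1} := by
      ext v
      simp only [hVle, Set.mem_inter_iff, Set.mem_union, Set.mem_setOf_eq]
      constructor
      · rintro ⟨(hA1 | hA2) | hB, hvote⟩
        · exact absurd (hA1 nom hval) (fun h1' => hdisj nom hval v h1' hvote)
        · exact Or.inl hA2
        · refine Or.inr ⟨hB, ?_⟩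
          have := hvote 1 h1k (by decide)
          rwa [h1, h2] at this
      · rintro (hA2 | ⟨hB, hsucc⟩)
        · exact ⟨Or.inl (Or.inr hA2), hA2 nom hval⟩
        · refine ⟨Or.inr hB, ?_⟩
          rcases hB.2.2 nom hval with hv1 | hv2
          · exfalso
            have := hv1 2 h2k (by decide)
            rw [h1, h2] at this
            exact hasymm v _ _ hsucc this
          · exact hv2
    have hd : Disjoint (AlwaysFor party succ k 2)
        {v ∈ BetweenFor party succ k 1 | succ v c2 c1} := by
      rw [Set.disjoint_left]
      intro v hv1 hv2
      exact hv2.1.2.1 hv1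
    rw [votesFrom, hset, Set.ncard_union_eq hd (Set.toFinite _) (Set.toFinite _)]
  -- a candidate of each party, for filling positions ≥ 3
  set pick : ℕ → C := fun i => if h : ∃ c : C, party c = i then h.choose else c1 with hpickdef
  have hpick : ∀ i ∈ Finset.Icc 1 k, party (pick i) = i := by
    intro i hi
    have h := hne i hi
    simp only [hpickdef, dif_pos h]
    exact h.choose_spec
  set cs : ℕ → C := fun j => if j = 1 then c1 else if j = 2 then c2 else pick j with hcsdef
  have hcs1 : cs 1 = c1 := by simp [hcsdef]
  have hcs2 : cs 2 = c2 := by simp [hcsdef]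
  have hcsval : ValidNom party k cs := by
    intro i hi
    rcases eq_or_ne i 1 with rfl | h1
    · rw [hcs1, hc1]
    rcases eq_or_ne i 2 with rfl | h2
    · rw [hcs2, hc2]
    simp only [hcsdef, if_neg h1, if_neg h2]
    exact hpick i hi
  -- updated schemes are valid
  have hupdval : ∀ (nom : ℕ → C) (c' : C), ValidNom party k nom → party c' = 1 →
      ValidNom party k (Function.update nom 1 c') := by
    intro nom c' hval hp i hi
    rcases eq_or_ne i 1 with rfl | h1
    · rw [Function.update_self]; exact hp
    · rw [Function.update_of_ne h1]; exact hval i hi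
  constructor
  · rintro ⟨cs', ⟨hparty', hfeas'⟩, hcs'1, hcs'2, -⟩
    -- a concrete valid extension of cs'
    set nom0 : ℕ → C := fun j => if j = 1 then c1 else if j = 2 then c2 else pick j with hnom0def
    have hn1 : nom0 1 = c1 := by simp [hnom0def]
    have hn2 : nom0 2 = c2 := by simp [hnom0def]
    have hval0 : ValidNom party k nom0 := hcsval
    have hext0 : Extends 2 cs' nom0 := by
      intro j hj
      obtain ⟨hja, hjb⟩ := Finset.mem_Icc.mp hj
      interval_cases j
      · rw [hn1, hcs'1]
      · rw [hn2, hcs'2]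
    have h11 : (1:ℕ) ∈ Finset.Icc 1 (2-1) := by decide
    obtain ⟨hle, hdev⟩ := hfeas' nom0 hval0 hext0 1 h11
    rw [key1 c1 nom0 hval0 hn1 hn2, ← hs1] at hle
    rcases eq_or_lt_of_le hle with heq | hlt
    · exact Or.inl heq
    refine Or.inr ⟨hlt, ?_⟩
    rintro ⟨c', hp', hge⟩
    rcases eq_or_ne c' c1 with rfl | hne'
    · rw [← hs1] at hge; omega
    have hd := hdev (by rw [key1 c1 nom0 hval0 hn1 hn2, ← hs1]; exact hlt) c' hp'
      (by rw [hcs'1]; exact hne')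
    rw [key1 c' (Function.update nom0 1 c') (hupdval nom0 c' hval0 hp')
      (Function.update_self 1 c' nom0) (by rw [Function.update_of_ne (by decide)]; exact hn2)]
      at hd
    omega
  · intro hrhs
    have hs1le : s1 ≤ sstar := by rcases hrhs with h | ⟨h, -⟩ <;> omega
    refine ⟨cs, ⟨?_, ?_⟩, hcs1, hcs2, ?_⟩
    · intro j hj
      obtain ⟨hja, hjb⟩ := Finset.mem_Icc.mp hj
      interval_cases j
      · rw [hcs1, hc1]
      · rw [hcs2, hc2]
    · intro nom hval hext j hj
      simp only [Finset.mem_Icc] at hj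
      have hj1 : j = 1 := by omega
      subst hj1
      have hn1 : nom 1 = c1 := by rw [hext 1 (by decide), hcs1]
      have hn2 : nom 2 = c2 := by rw [hext 2 (by decide), hcs2]
      have hv1 := key1 c1 nom hval hn1 hn2
      constructor
      · rw [hv1, ← hs1]; exact hs1le
      · intro hlt c' hp' hne'
        rw [hv1, ← hs1] at hlt
        rcases hrhs with h | ⟨-, hno⟩
        · omega
        have hd : ¬ sstar ≤ (AlwaysFor party succ k 1).ncard +
            {v ∈ BetweenFor party succ k 1 | succ v c' c2}.ncard :=
          fun hge => hno ⟨c', hp', hge⟩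
        rw [key1 c' (Function.update nom 1 c') (hupdval nom c' hval hp')
          (Function.update_self 1 c' nom) (by rw [Function.update_of_ne (by decide)]; exact hn2)]
        omega
    · intro nom hval hext
      have hn1 : nom 1 = c1 := by rw [hext 1 (by decide), hcs1]
      have hn2 : nom 2 = c2 := by rw [hext 2 (by decide), hcs2]
      exact ⟨by rw [key1 c1 nom hval hn1 hn2, hs1], by rw [key2 nom hval hn1 hn2, hs2]⟩
end

section
/- A candidate c_κ of the distinguished party P_κ is a Plurality winner with score s* in the reduced election of some nomination scheme if and only if there exist non-negative integers s_l and s_r with s_l + s_r − |V^{P_κ}| = s* such that s_l is a left-PP-viable score for c_κ and s_r is a right-PP-viable score for c_κ. -/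
section AuxPW

variable {C V : Type*} {k : ℕ} {party : C → ℕ} {succ : V → C → C → Prop}

lemma rel_asymm {α : Type*} {r : α → α → Prop} (hr : IsStrictTotalOrder α r)
    {a b : α} (h1 : r a b) (h2 : r b a) : False :=
  hr.irrefl a (hr.trans a b a h1 h2)

lemma finset_exists_max {α : Type*} {r : α → α → Prop} (hr : IsStrictTotalOrder α r)
    (s : Finset α) (hs : s.Nonempty) : ∃ a ∈ s, ∀ b ∈ s, b ≠ a → r a b := by
  classical
  induction s using Finset.induction_on with
  | empty => simp at hs
  | @insert x s hx ih =>
    rcases s.eq_empty_or_nonempty with rfl | hs'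
    · refine ⟨x, Finset.mem_insert_self _ _, ?_⟩
      intro b hb hbx
      simp only [Finset.mem_insert, Finset.notMem_empty, or_false] at hb
      exact absurd hb hbx
    · obtain ⟨a, ha, hmax⟩ := ih hs'
      rcases (haveI := hr; trichotomous_of (r := r) x a) with hxa | rfl | hax
      · refine ⟨x, Finset.mem_insert_self _ _, ?_⟩
        intro b hb hbx
        rcases Finset.mem_insert.1 hb with rfl | hb
        · exact absurd rfl hbx
        · rcases eq_or_ne b a with rfl | hba
          · exact hxa
          · exact hr.trans _ _ _ hxa (hmax b hb hba)
      · exact absurd ha hx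
      · refine ⟨a, Finset.mem_insert_of_mem ha, ?_⟩
        intro b hb hba
        rcases Finset.mem_insert.1 hb with rfl | hb
        · exact hax
        · exact hmax b hb hba

lemma vote_exists (hsto : ∀ v : V, IsStrictTotalOrder C (succ v))
    {nom : ℕ → C} (hval : ValidNom party k nom) (hk : 1 ≤ k) (v : V) :
    ∃ i ∈ Finset.Icc 1 k, v ∈ votesFor succ k nom i := by
  classical
  have h1 : (1 : ℕ) ∈ Finset.Icc 1 k := by simp [hk]
  obtain ⟨a, ha, hmax⟩ := finset_exists_max (hsto v) ((Finset.Icc 1 k).image nom)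
    ⟨nom 1, Finset.mem_image_of_mem _ h1⟩
  obtain ⟨i, hi, rfl⟩ := Finset.mem_image.1 ha
  refine ⟨i, hi, fun i' hi' hne => ?_⟩
  refine hmax _ (Finset.mem_image_of_mem _ hi') fun h => hne ?_
  rw [← hval i' hi', ← hval i hi, h]

lemma vote_unique (hsto : ∀ v : V, IsStrictTotalOrder C (succ v))
    {nom : ℕ → C} {i j : ℕ} (hi : i ∈ Finset.Icc 1 k) (hj : j ∈ Finset.Icc 1 k)
    (hij : i ≠ j) {v : V} (h1 : v ∈ votesFor succ k nom i)
    (h2 : v ∈ votesFor succ k nom j) : False :=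
  rel_asymm (hsto v) (h1 j hj (Ne.symm hij)) (h2 i hi hij)

lemma no_gap (hsto : ∀ v : V, IsStrictTotalOrder C (succ v))
    (hPASP : ∀ v : V, PASPVote party (succ v))
    {nomi nomj : ℕ → C} (hvi : ValidNom party k nomi) (hvj : ValidNom party k nomj)
    {i j : ℕ} (hi : i ∈ Finset.Icc 1 k) (hj : j ∈ Finset.Icc 1 k) (hij : i + 2 ≤ j)
    {v : V} (h1 : v ∈ votesFor succ k nomi i) (h2 : v ∈ votesFor succ k nomj j) :
    False := by
  simp only [Finset.mem_Icc] at hi hj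
  obtain ⟨lt, hlt, hcomp, hsp⟩ := hPASP v
  have hmem1 : i + 1 ∈ Finset.Icc 1 k := by simp only [Finset.mem_Icc]; omega
  have key : ∀ c c' : C, party c < party c' → lt c c' := by
    intro c c' h
    rcases (haveI := hlt; trichotomous_of (r := lt) c c') with h' | rfl | h'
    · exact h'
    · exact absurd h (lt_irrefl _)
    · exact absurd (hcomp _ _ h') (by omega)
  have hpa : party (nomi i) = i := hvi i (by simp only [Finset.mem_Icc]; omega)
  have hpx : party (nomi (i+1)) = i + 1 := hvi (i+1) hmem1
  have hpy : party (nomj (i+1)) = i + 1 := hvj (i+1) hmem1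
  have hpb : party (nomj j) = j := hvj j (by simp only [Finset.mem_Icc]; omega)
  have hax : succ v (nomi i) (nomi (i+1)) := h1 (i+1) hmem1 (by omega)
  have hby : succ v (nomj j) (nomj (i+1)) := h2 (i+1) hmem1 (by omega)
  have hxb : succ v (nomi (i+1)) (nomj j) :=
    hsp _ _ _ (key _ _ (by rw [hpa, hpx]; omega)) (key _ _ (by rw [hpx, hpb]; omega)) hax
  have hab : succ v (nomi i) (nomj j) := (hsto v).trans _ _ _ hax hxb
  rcases (haveI := hsto v; trichotomous_of (r := succ v) (nomi i) (nomj (i+1))) with hay | heq | hya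
  · exact rel_asymm (hsto v)
      (hsp _ _ _ (key _ _ (by rw [hpa, hpy]; omega)) (key _ _ (by rw [hpy, hpb]; omega)) hay) hby
  · rw [heq, hpy] at hpa; omega
  · exact rel_asymm (hsto v) hab ((hsto v).trans _ _ _ hby hya)

lemma exists_validNom (hne : ∀ i ∈ Finset.Icc 1 k, ∃ c : C, party c = i)
    (hk : 1 ≤ k) : ∃ nom : ℕ → C, ValidNom party k nom := by
  classical
  have hC : Nonempty C := by
    obtain ⟨c, -⟩ := hne 1 (by simp [hk]); exact ⟨c⟩
  refine ⟨fun i => if h : ∃ c : C, party c = i then h.choose else Classical.arbitrary C, ?_⟩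
  intro i hi
  have h : ∃ c : C, party c = i := hne i hi
  simp only [dif_pos h]
  exact h.choose_spec

lemma cover (hne : ∀ i ∈ Finset.Icc 1 k, ∃ c : C, party c = i)
    (hsto : ∀ v : V, IsStrictTotalOrder C (succ v))
    (hPASP : ∀ v : V, PASPVote party (succ v)) (hk : 1 ≤ k) (v : V) :
    (∃ m, 1 ≤ m ∧ m ≤ k ∧ v ∈ AlwaysFor party succ k m) ∨
      (∃ m, 1 ≤ m ∧ m + 1 ≤ k ∧ v ∈ BetweenFor party succ k m) := by
  obtain ⟨nom0, hnom0⟩ := exists_validNom hne hk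
  obtain ⟨m, hm, hvm⟩ := vote_exists hsto hnom0 hk v
  simp only [Finset.mem_Icc] at hm
  by_cases Hup : ∃ nom : ℕ → C, ValidNom party k nom ∧ v ∈ votesFor succ k nom (m+1) ∧ m+1 ≤ k
  · by_cases Hdown : ∃ nom : ℕ → C, ValidNom party k nom ∧ v ∈ votesFor succ k nom (m-1) ∧ 1 ≤ m - 1
    · exfalso
      obtain ⟨n1, hn1, hv1, hb1⟩ := Hdown
      obtain ⟨n2, hn2, hv2, hb2⟩ := Hup
      exact no_gap hsto hPASP hn1 hn2 (by simp only [Finset.mem_Icc]; omega)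
        (by simp only [Finset.mem_Icc]; omega) (by omega) hv1 hv2
    · obtain ⟨n2, hn2, hv2, hb2⟩ := Hup
      right
      refine ⟨m, hm.1, hb2, ?_, ?_, ?_⟩
      · intro hA
        exact vote_unique hsto (i := m) (j := m+1) (by simp only [Finset.mem_Icc]; omega)
          (by simp only [Finset.mem_Icc]; omega) (by omega) (hA n2 hn2) hv2
      · intro hA
        exact vote_unique hsto (i := m+1) (j := m) (by simp only [Finset.mem_Icc]; omega)
          (by simp only [Finset.mem_Icc]; omega) (by omega) (hA nom0 hnom0) hvm
      · intro nom hval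
        obtain ⟨i, hi, hvi⟩ := vote_exists hsto hval hk v
        simp only [Finset.mem_Icc] at hi
        rcases Nat.lt_trichotomy i m with hlt | rfl | hgt
        · rcases eq_or_ne i (m-1) with rfl | hne'
          · exact absurd ⟨nom, hval, hvi, by omega⟩ Hdown
          · exact (no_gap hsto hPASP hval hnom0 (by simp only [Finset.mem_Icc]; omega)
              (by simp only [Finset.mem_Icc]; omega) (by omega) hvi hvm).elim
        · exact Or.inl hvi
        · rcases eq_or_ne i (m+1) with rfl | hne'
          · exact Or.inr hvi
          · exact (no_gap hsto hPASP hnom0 hval (by simp only [Finset.mem_Icc]; omega)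
              (by simp only [Finset.mem_Icc]; omega) (by omega) hvm hvi).elim
  · by_cases Hdown : ∃ nom : ℕ → C, ValidNom party k nom ∧ v ∈ votesFor succ k nom (m-1) ∧ 1 ≤ m - 1
    · obtain ⟨n1, hn1, hv1, hb1⟩ := Hdown
      right
      have e : m - 1 + 1 = m := by omega
      refine ⟨m - 1, hb1, by omega, ?_, ?_, ?_⟩
      · intro hA
        exact vote_unique hsto (i := m-1) (j := m) (by simp only [Finset.mem_Icc]; omega)
          (by simp only [Finset.mem_Icc]; omega) (by omega) (hA nom0 hnom0) hvm
      · rw [e]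
        intro hA
        exact vote_unique hsto (i := m) (j := m-1) (by simp only [Finset.mem_Icc]; omega)
          (by simp only [Finset.mem_Icc]; omega) (by omega) (hA n1 hn1) hv1
      · intro nom hval
        rw [e]
        obtain ⟨i, hi, hvi⟩ := vote_exists hsto hval hk v
        simp only [Finset.mem_Icc] at hi
        rcases Nat.lt_trichotomy i m with hlt | rfl | hgt
        · rcases eq_or_ne i (m-1) with rfl | hne'
          · exact Or.inl hvi
          · exact (no_gap hsto hPASP hval hnom0 (by simp only [Finset.mem_Icc]; omega)
              (by simp only [Finset.mem_Icc]; omega) (by omega) hvi hvm).elim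
        · exact Or.inr hvi
        · rcases eq_or_ne i (m+1) with rfl | hne'
          · exact absurd ⟨nom, hval, hvi, by omega⟩ Hup
          · exact (no_gap hsto hPASP hnom0 hval (by simp only [Finset.mem_Icc]; omega)
              (by simp only [Finset.mem_Icc]; omega) (by omega) hvm hvi).elim
    · left
      refine ⟨m, hm.1, hm.2, ?_⟩
      intro nom hval
      obtain ⟨i, hi, hvi⟩ := vote_exists hsto hval hk v
      simp only [Finset.mem_Icc] at hi
      rcases Nat.lt_trichotomy i m with hlt | rfl | hgt
      · rcases eq_or_ne i (m-1) with rfl | hne'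
        · exact absurd ⟨nom, hval, hvi, by omega⟩ Hdown
        · exact (no_gap hsto hPASP hval hnom0 (by simp only [Finset.mem_Icc]; omega)
            (by simp only [Finset.mem_Icc]; omega) (by omega) hvi hvm).elim
      · exact hvi
      · rcases eq_or_ne i (m+1) with rfl | hne'
        · exact absurd ⟨nom, hval, hvi, by omega⟩ Hup
        · exact (no_gap hsto hPASP hnom0 hval (by simp only [Finset.mem_Icc]; omega)
            (by simp only [Finset.mem_Icc]; omega) (by omega) hvm hvi).elim

lemma B0_empty (hne : ∀ i ∈ Finset.Icc 1 k, ∃ c : C, party c = i)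
    (hsto : ∀ v : V, IsStrictTotalOrder C (succ v)) (hk : 1 ≤ k) :
    BetweenFor party succ k 0 = (∅ : Set V) := by
  rw [Set.eq_empty_iff_forall_notMem]
  intro v hv
  obtain ⟨h0, h1, h3⟩ := hv
  apply h1
  intro nom hval
  classical
  set nom' : ℕ → C := Function.update nom 0 (nom 1) with hnom'
  have hval' : ValidNom party k nom' := by
    intro i hi
    have hi0 : i ≠ 0 := by simp only [Finset.mem_Icc] at hi; omega
    rw [hnom', Function.update_of_ne hi0]
    exact hval i hi
  rcases h3 nom' hval' with h | h
  · exfalso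
    have := h 1 (by simp only [Finset.mem_Icc]; omega) one_ne_zero
    rw [hnom', Function.update_self, Function.update_of_ne one_ne_zero] at this
    exact (hsto v).irrefl _ this
  · intro i' hi' hne'
    have h2 := h i' hi' hne'
    have hi0 : i' ≠ 0 := by simp only [Finset.mem_Icc] at hi'; omega
    rwa [hnom', Function.update_of_ne hi0, Function.update_of_ne (by omega : (0:ℕ)+1 ≠ 0)] at h2

lemma Bk_empty (hne : ∀ i ∈ Finset.Icc 1 k, ∃ c : C, party c = i)
    (hsto : ∀ v : V, IsStrictTotalOrder C (succ v)) (hk : 1 ≤ k) :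
    BetweenFor party succ k k = (∅ : Set V) := by
  rw [Set.eq_empty_iff_forall_notMem]
  intro v hv
  obtain ⟨h0, h1, h3⟩ := hv
  apply h0
  intro nom hval
  classical
  set nom' : ℕ → C := Function.update nom (k+1) (nom 1) with hnom'
  have hval' : ValidNom party k nom' := by
    intro i hi
    have hi0 : i ≠ k + 1 := by simp only [Finset.mem_Icc] at hi; omega
    rw [hnom', Function.update_of_ne hi0]
    exact hval i hi
  rcases h3 nom' hval' with h | h
  · intro i' hi' hne'
    have h2 := h i' hi' hne'
    have hi0 : i' ≠ k + 1 := by simp only [Finset.mem_Icc] at hi'; omega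
    rwa [hnom', Function.update_of_ne hi0, Function.update_of_ne (by omega : k ≠ k+1)] at h2
  · exfalso
    have := h 1 (by simp only [Finset.mem_Icc]; omega) (by omega)
    rw [hnom', Function.update_self, Function.update_of_ne (by omega : (1:ℕ) ≠ k+1)] at this
    exact (hsto v).irrefl _ this

lemma vote_classify (hne : ∀ i ∈ Finset.Icc 1 k, ∃ c : C, party c = i)
    (hsto : ∀ v : V, IsStrictTotalOrder C (succ v))
    (hPASP : ∀ v : V, PASPVote party (succ v)) (hk : 1 ≤ k) {nom : ℕ → C}
    (hval : ValidNom party k nom) {j : ℕ} (hj1 : 1 ≤ j) (hj2 : j ≤ k) {v : V}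
    (hv : v ∈ votesFor succ k nom j) :
    v ∈ AlwaysFor party succ k j ∨
      (2 ≤ j ∧ v ∈ BetweenFor party succ k (j-1)) ∨
      (j + 1 ≤ k ∧ v ∈ BetweenFor party succ k j) := by
  rcases cover hne hsto hPASP hk v with ⟨m, hm1, hm2, hA⟩ | ⟨m, hm1, hm2, hB⟩
  · have hvm := hA nom hval
    have hmj : m = j := by
      by_contra hne'
      exact vote_unique hsto (by simp only [Finset.mem_Icc]; omega)
        (by simp only [Finset.mem_Icc]; omega) hne' hvm hv
    subst hmj; exact Or.inl hA
  · rcases hB.2.2 nom hval with h | h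
    · have hmj : m = j := by
        by_contra hne'
        exact vote_unique hsto (by simp only [Finset.mem_Icc]; omega)
          (by simp only [Finset.mem_Icc]; omega) hne' h hv
      subst hmj; exact Or.inr (Or.inr ⟨by omega, hB⟩)
    · have hmj : m + 1 = j := by
        by_contra hne'
        exact vote_unique hsto (by simp only [Finset.mem_Icc]; omega)
          (by simp only [Finset.mem_Icc]; omega) hne' h hv
      refine Or.inr (Or.inl ⟨by omega, ?_⟩)
      have e : j - 1 = m := by omega
      rw [e]; exact hB

lemma between_local_r (hsto : ∀ v : V, IsStrictTotalOrder C (succ v))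
    {m : ℕ} {nom nom' : ℕ → C} (hm1 : 1 ≤ m) (hm2 : m + 1 ≤ k)
    (h1 : nom m = nom' m) (h2 : nom (m+1) = nom' (m+1))
    {v : V} (hval' : ValidNom party k nom')
    (hB : v ∈ BetweenFor party succ k m)
    (hvote : v ∈ votesFor succ k nom (m+1)) :
    v ∈ votesFor succ k nom' (m+1) := by
  rcases hB.2.2 nom' hval' with h | h
  · exfalso
    have ha : succ v (nom' m) (nom' (m+1)) :=
      h (m+1) (by simp only [Finset.mem_Icc]; omega) (by omega)
    have hb : succ v (nom (m+1)) (nom m) :=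
      hvote m (by simp only [Finset.mem_Icc]; omega) (by omega)
    rw [h1, h2] at hb
    exact rel_asymm (hsto v) ha hb
  · exact h

lemma between_local_l (hsto : ∀ v : V, IsStrictTotalOrder C (succ v))
    {m : ℕ} {nom nom' : ℕ → C} (hm1 : 1 ≤ m) (hm2 : m + 1 ≤ k)
    (h1 : nom m = nom' m) (h2 : nom (m+1) = nom' (m+1))
    {v : V} (hval' : ValidNom party k nom')
    (hB : v ∈ BetweenFor party succ k m)
    (hvote : v ∈ votesFor succ k nom m) :
    v ∈ votesFor succ k nom' m := by
  rcases hB.2.2 nom' hval' with h | h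
  · exact h
  · exfalso
    have ha : succ v (nom' (m+1)) (nom' m) :=
      h m (by simp only [Finset.mem_Icc]; omega) (by omega)
    have hb : succ v (nom m) (nom (m+1)) :=
      hvote (m+1) (by simp only [Finset.mem_Icc]; omega) (by omega)
    rw [h1, h2] at hb
    exact rel_asymm (hsto v) ha hb

lemma votesFor_eq_left (hne : ∀ i ∈ Finset.Icc 1 k, ∃ c : C, party c = i)
    (hsto : ∀ v : V, IsStrictTotalOrder C (succ v))
    (hPASP : ∀ v : V, PASPVote party (succ v)) {κ : ℕ} (hκ1 : 1 ≤ κ) (hκk : κ ≤ k)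
    {nom nom' : ℕ → C} (hval : ValidNom party k nom) (hval' : ValidNom party k nom')
    (hagree : ∀ l ∈ Finset.Icc 1 κ, nom l = nom' l)
    {j : ℕ} (hj1 : 1 ≤ j) (hj2 : j + 1 ≤ κ) :
    votesFor succ k nom j = votesFor succ k nom' j := by
  have hk : 1 ≤ k := le_trans hκ1 hκk
  have hsub : ∀ (n n' : ℕ → C), ValidNom party k n → ValidNom party k n' →
      (∀ l ∈ Finset.Icc 1 κ, n l = n' l) →
      votesFor succ k n j ⊆ votesFor succ k n' j := by
    intro n n' hn hn' hag v hv
    rcases vote_classify hne hsto hPASP hk hn hj1 (by omega) hv with hA | ⟨h2j, hB⟩ | ⟨hjk, hB⟩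
    · exact hA n' hn'
    · have e : j - 1 + 1 = j := by omega
      have hres := between_local_r hsto (m := j-1) (by omega) (by omega)
        (hag (j-1) (by simp only [Finset.mem_Icc]; omega))
        (by rw [e]; exact hag j (by simp only [Finset.mem_Icc]; omega)) hn' hB
        (by rw [e]; exact hv)
      rwa [e] at hres
    · exact between_local_l hsto (m := j) hj1 (by omega)
        (hag j (by simp only [Finset.mem_Icc]; omega))
        (hag (j+1) (by simp only [Finset.mem_Icc]; omega)) hn' hB hv
  exact Set.Subset.antisymm (hsub nom nom' hval hval' hagree)
    (hsub nom' nom hval' hval (fun l hl => (hagree l hl).symm))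

lemma votesFor_eq_right (hne : ∀ i ∈ Finset.Icc 1 k, ∃ c : C, party c = i)
    (hsto : ∀ v : V, IsStrictTotalOrder C (succ v))
    (hPASP : ∀ v : V, PASPVote party (succ v)) {κ : ℕ} (hκ1 : 1 ≤ κ) (hκk : κ ≤ k)
    {nom nom' : ℕ → C} (hval : ValidNom party k nom) (hval' : ValidNom party k nom')
    (hagree : ∀ l ∈ Finset.Icc κ k, nom l = nom' l)
    {j : ℕ} (hj1 : κ + 1 ≤ j) (hj2 : j ≤ k) :
    votesFor succ k nom j = votesFor succ k nom' j := by
  have hk : 1 ≤ k := le_trans hκ1 hκk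
  have hsub : ∀ (n n' : ℕ → C), ValidNom party k n → ValidNom party k n' →
      (∀ l ∈ Finset.Icc κ k, n l = n' l) →
      votesFor succ k n j ⊆ votesFor succ k n' j := by
    intro n n' hn hn' hag v hv
    rcases vote_classify hne hsto hPASP hk hn (by omega) hj2 hv with hA | ⟨h2j, hB⟩ | ⟨hjk, hB⟩
    · exact hA n' hn'
    · have e : j - 1 + 1 = j := by omega
      have hres := between_local_r hsto (m := j-1) (by omega) (by omega)
        (hag (j-1) (by simp only [Finset.mem_Icc]; omega))
        (by rw [e]; exact hag j (by simp only [Finset.mem_Icc]; omega)) hn' hB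
        (by rw [e]; exact hv)
      rwa [e] at hres
    · exact between_local_l hsto (m := j) (by omega) (by omega)
        (hag j (by simp only [Finset.mem_Icc]; omega))
        (hag (j+1) (by simp only [Finset.mem_Icc]; omega)) hn' hB hv
  exact Set.Subset.antisymm (hsub nom nom' hval hval' hagree)
    (hsub nom' nom hval' hval (fun l hl => (hagree l hl).symm))

lemma Vle_inter (hne : ∀ i ∈ Finset.Icc 1 k, ∃ c : C, party c = i)
    (hsto : ∀ v : V, IsStrictTotalOrder C (succ v))
    {κ : ℕ} (hκ1 : 1 ≤ κ) (hκk : κ ≤ k)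
    {nom : ℕ → C} (hval : ValidNom party k nom) :
    Vle party succ k κ ∩ votesFor succ k nom κ =
      AlwaysFor party succ k κ ∪
        (BetweenFor party succ k (κ-1) ∩ votesFor succ k nom κ) := by
  have hk : 1 ≤ k := le_trans hκ1 hκk
  ext v
  simp only [Set.mem_inter_iff, Set.mem_union, Vle, Set.mem_union, Set.mem_iUnion,
    exists_prop]
  constructor
  · rintro ⟨hle, hvote⟩
    rcases hle with ⟨j, hj, hA⟩ | ⟨j, hj, hB⟩
    · simp only [Finset.mem_Icc] at hj
      have hvj := hA nom hval
      have hjκ : j = κ := by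
        by_contra hne'
        exact vote_unique hsto (by simp only [Finset.mem_Icc]; omega)
          (by simp only [Finset.mem_Icc]; omega) hne' hvj hvote
      subst hjκ
      exact Or.inl hA
    · simp only [Finset.mem_Icc] at hj
      rcases hB.2.2 nom hval with h | h
      · exact (vote_unique hsto (i := j) (j := κ) (by simp only [Finset.mem_Icc]; omega)
          (by simp only [Finset.mem_Icc]; omega) (by omega) h hvote).elim
      · have hjκ : j + 1 = κ := by
          by_contra hne'
          exact vote_unique hsto (by simp only [Finset.mem_Icc]; omega)
            (by simp only [Finset.mem_Icc]; omega) hne' h hvote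
        refine Or.inr ⟨?_, hvote⟩
        have e : κ - 1 = j := by omega
        rw [e]; exact hB
  · rintro (hA | ⟨hB, hvote⟩)
    · exact ⟨Or.inl ⟨κ, by simp only [Finset.mem_Icc]; omega, hA⟩, hA nom hval⟩
    · rcases Nat.lt_or_ge κ 2 with h2 | h2
      · rw [show κ - 1 = 0 by omega, B0_empty hne hsto hk] at hB
        exact hB.elim
      · exact ⟨Or.inr ⟨κ - 1, by simp only [Finset.mem_Icc]; omega, hB⟩, hvote⟩

lemma Vge_inter (hne : ∀ i ∈ Finset.Icc 1 k, ∃ c : C, party c = i)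
    (hsto : ∀ v : V, IsStrictTotalOrder C (succ v))
    {κ : ℕ} (hκ1 : 1 ≤ κ) (hκk : κ ≤ k)
    {nom : ℕ → C} (hval : ValidNom party k nom) :
    Vge party succ k κ ∩ votesFor succ k nom κ =
      AlwaysFor party succ k κ ∪
        (BetweenFor party succ k κ ∩ votesFor succ k nom κ) := by
  have hk : 1 ≤ k := le_trans hκ1 hκk
  ext v
  simp only [Set.mem_inter_iff, Set.mem_union, Vge, Set.mem_union, Set.mem_iUnion,
    exists_prop]
  constructor
  · rintro ⟨hge, hvote⟩
    rcases hge with ⟨j, hj, hA⟩ | ⟨j, hj, hB⟩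
    · simp only [Finset.mem_Icc] at hj
      have hvj := hA nom hval
      have hjκ : j = κ := by
        by_contra hne'
        exact vote_unique hsto (by simp only [Finset.mem_Icc]; omega)
          (by simp only [Finset.mem_Icc]; omega) hne' hvj hvote
      subst hjκ
      exact Or.inl hA
    · simp only [Finset.mem_Icc] at hj
      rcases hB.2.2 nom hval with h | h
      · have hjκ : j = κ := by
          by_contra hne'
          exact vote_unique hsto (by simp only [Finset.mem_Icc]; omega)
            (by simp only [Finset.mem_Icc]; omega) hne' h hvote
        subst hjκ
        exact Or.inr ⟨hB, hvote⟩
      · exact (vote_unique hsto (i := j+1) (j := κ) (by simp only [Finset.mem_Icc]; omega)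
          (by simp only [Finset.mem_Icc]; omega) (by omega) h hvote).elim
  · rintro (hA | ⟨hB, hvote⟩)
    · exact ⟨Or.inl ⟨κ, by simp only [Finset.mem_Icc]; omega, hA⟩, hA nom hval⟩
    · rcases Nat.lt_or_ge κ k with h2 | h2
      · exact ⟨Or.inr ⟨κ, by simp only [Finset.mem_Icc]; omega, hB⟩, hvote⟩
      · have : κ = k := by omega
        subst this
        rw [Bk_empty hne hsto hk] at hB
        exact hB.elim

lemma votes_decomp (hne : ∀ i ∈ Finset.Icc 1 k, ∃ c : C, party c = i)
    (hsto : ∀ v : V, IsStrictTotalOrder C (succ v))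
    (hPASP : ∀ v : V, PASPVote party (succ v))
    {κ : ℕ} (hκ1 : 1 ≤ κ) (hκk : κ ≤ k)
    {nom : ℕ → C} (hval : ValidNom party k nom) :
    votesFor succ k nom κ =
      AlwaysFor party succ k κ ∪
        (BetweenFor party succ k (κ-1) ∩ votesFor succ k nom κ) ∪
        (BetweenFor party succ k κ ∩ votesFor succ k nom κ) := by
  have hk : 1 ≤ k := le_trans hκ1 hκk
  apply Set.Subset.antisymm
  · intro v hv
    rcases vote_classify hne hsto hPASP hk hval hκ1 hκk hv with hA | ⟨_, hB⟩ | ⟨_, hB⟩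
    · exact Or.inl (Or.inl hA)
    · exact Or.inl (Or.inr ⟨hB, hv⟩)
    · exact Or.inr ⟨hB, hv⟩
  · rintro v ((hA | ⟨_, hv⟩) | ⟨_, hv⟩)
    · exact hA nom hval
    · exact hv
    · exact hv

lemma Bl_Br_disj (hne : ∀ i ∈ Finset.Icc 1 k, ∃ c : C, party c = i)
    (hsto : ∀ v : V, IsStrictTotalOrder C (succ v))
    {κ : ℕ} (hκ1 : 1 ≤ κ) (hκk : κ ≤ k) :
    BetweenFor party succ k (κ-1) ∩ BetweenFor party succ k κ = (∅ : Set V) := by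
  have hk : 1 ≤ k := le_trans hκ1 hκk
  rcases Nat.lt_or_ge κ 2 with h2 | h2
  · rw [show κ - 1 = 0 by omega, B0_empty hne hsto hk, Set.empty_inter]
  rcases Nat.lt_or_ge κ k with h3 | h3
  swap
  · have : κ = k := by omega
    subst this
    rw [Bk_empty hne hsto hk, Set.inter_empty]
  rw [Set.eq_empty_iff_forall_notMem]
  rintro v ⟨hBl, hBr⟩
  apply hBl.2.1
  have e : κ - 1 + 1 = κ := by omega
  rw [e]
  intro nom hval
  rcases hBl.2.2 nom hval with h | h
  · rcases hBr.2.2 nom hval with h' | h'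
    · exact (vote_unique hsto (i := κ-1) (j := κ) (by simp only [Finset.mem_Icc]; omega)
        (by simp only [Finset.mem_Icc]; omega) (by omega) h h').elim
    · exact (vote_unique hsto (i := κ-1) (j := κ+1) (by simp only [Finset.mem_Icc]; omega)
        (by simp only [Finset.mem_Icc]; omega) (by omega) h h').elim
  · rwa [e] at h

lemma count_key [Fintype V] (hne : ∀ i ∈ Finset.Icc 1 k, ∃ c : C, party c = i)
    (hsto : ∀ v : V, IsStrictTotalOrder C (succ v))
    (hPASP : ∀ v : V, PASPVote party (succ v))
    {κ : ℕ} (hκ1 : 1 ≤ κ) (hκk : κ ≤ k)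
    {nom : ℕ → C} (hval : ValidNom party k nom) :
    votesFrom (Vle party succ k κ) succ k nom κ +
      votesFrom (Vge party succ k κ) succ k nom κ =
    score succ k nom κ + (AlwaysFor party succ k κ).ncard := by
  have e : κ - 1 + 1 = κ := by omega
  set A := AlwaysFor party succ k κ with hA
  set X := votesFor succ k nom κ with hX
  set Bl := BetweenFor party succ k (κ-1) ∩ X with hBl
  set Br := BetweenFor party succ k κ ∩ X with hBr
  have d1 : Disjoint A Bl := by
    rw [Set.disjoint_left]
    intro v hv hv'
    exact hv'.1.2.1 (by rw [e]; exact hv)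
  have d2 : Disjoint A Br := by
    rw [Set.disjoint_left]
    intro v hv hv'
    exact hv'.1.1 hv
  have d3 : Disjoint Bl Br := by
    rw [Set.disjoint_left]
    intro v hv hv'
    exact Set.eq_empty_iff_forall_notMem.1 (Bl_Br_disj hne hsto hκ1 hκk) v ⟨hv.1, hv'.1⟩
  have hdec : X = A ∪ Bl ∪ Br := votes_decomp hne hsto hPASP hκ1 hκk hval
  have hVle : Vle party succ k κ ∩ X = A ∪ Bl := Vle_inter hne hsto hκ1 hκk hval
  have hVge : Vge party succ k κ ∩ X = A ∪ Br := Vge_inter hne hsto hκ1 hκk hval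
  show (Vle party succ k κ ∩ X).ncard + (Vge party succ k κ ∩ X).ncard
      = X.ncard + A.ncard
  rw [hVle, hVge, hdec, Set.ncard_union_eq (Disjoint.union_left d2 d3)
      ((Set.toFinite _).union (Set.toFinite _)) (Set.toFinite _),
    Set.ncard_union_eq d1 (Set.toFinite _) (Set.toFinite _),
    Set.ncard_union_eq d2 (Set.toFinite _) (Set.toFinite _)]
  ring

lemma votesFor_subset_Vle (hne : ∀ i ∈ Finset.Icc 1 k, ∃ c : C, party c = i)
    (hsto : ∀ v : V, IsStrictTotalOrder C (succ v))
    (hPASP : ∀ v : V, PASPVote party (succ v))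
    {κ : ℕ} (hκ1 : 1 ≤ κ) (hκk : κ ≤ k)
    {nom : ℕ → C} (hval : ValidNom party k nom)
    {j : ℕ} (hj1 : 1 ≤ j) (hj2 : j + 1 ≤ κ) :
    votesFor succ k nom j ⊆ Vle party succ k κ := by
  intro v hv
  have hk : 1 ≤ k := le_trans hκ1 hκk
  rcases vote_classify hne hsto hPASP hk hval hj1 (by omega) hv with hA | ⟨h2, hB⟩ | ⟨hjk, hB⟩
  · exact Set.mem_union_left _
      (Set.mem_biUnion (show j ∈ Finset.Icc 1 κ by simp only [Finset.mem_Icc]; omega) hA)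
  · exact Set.mem_union_right _
      (Set.mem_biUnion (show j - 1 ∈ Finset.Icc 1 (κ-1) by simp only [Finset.mem_Icc]; omega) hB)
  · exact Set.mem_union_right _
      (Set.mem_biUnion (show j ∈ Finset.Icc 1 (κ-1) by simp only [Finset.mem_Icc]; omega) hB)

lemma votesFor_subset_Vge (hne : ∀ i ∈ Finset.Icc 1 k, ∃ c : C, party c = i)
    (hsto : ∀ v : V, IsStrictTotalOrder C (succ v))
    (hPASP : ∀ v : V, PASPVote party (succ v))
    {κ : ℕ} (hκ1 : 1 ≤ κ) (hκk : κ ≤ k)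
    {nom : ℕ → C} (hval : ValidNom party k nom)
    {j : ℕ} (hj1 : κ + 1 ≤ j) (hj2 : j ≤ k) :
    votesFor succ k nom j ⊆ Vge party succ k κ := by
  intro v hv
  have hk : 1 ≤ k := le_trans hκ1 hκk
  rcases vote_classify hne hsto hPASP hk hval (by omega) hj2 hv with hA | ⟨h2, hB⟩ | ⟨hjk, hB⟩
  · exact Set.mem_union_left _
      (Set.mem_biUnion (show j ∈ Finset.Icc κ k by simp only [Finset.mem_Icc]; omega) hA)
  · exact Set.mem_union_right _
      (Set.mem_biUnion (show j - 1 ∈ Finset.Icc κ (k-1) by simp only [Finset.mem_Icc]; omega) hB)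
  · exact Set.mem_union_right _
      (Set.mem_biUnion (show j ∈ Finset.Icc κ (k-1) by simp only [Finset.mem_Icc]; omega) hB)

lemma Vle_votesFrom_eq (hne : ∀ i ∈ Finset.Icc 1 k, ∃ c : C, party c = i)
    (hsto : ∀ v : V, IsStrictTotalOrder C (succ v))
    {κ : ℕ} (hκ1 : 1 ≤ κ) (hκk : κ ≤ k)
    {nom nom' : ℕ → C} (hval : ValidNom party k nom) (hval' : ValidNom party k nom')
    (hagm : 2 ≤ κ → nom (κ-1) = nom' (κ-1)) (hag : nom κ = nom' κ) :
    votesFrom (Vle party succ k κ) succ k nom κ =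
      votesFrom (Vle party succ k κ) succ k nom' κ := by
  have hk : 1 ≤ k := le_trans hκ1 hκk
  have e : κ - 1 + 1 = κ := by omega
  have hBeq : BetweenFor party succ k (κ-1) ∩ votesFor succ k nom κ =
      BetweenFor party succ k (κ-1) ∩ votesFor succ k nom' κ := by
    rcases Nat.lt_or_ge κ 2 with h2 | h2
    · rw [show κ - 1 = 0 by omega, B0_empty hne hsto hk, Set.empty_inter, Set.empty_inter]
    ext v
    constructor
    · rintro ⟨hB, hv⟩
      refine ⟨hB, ?_⟩
      have hres := between_local_r hsto (m := κ-1) (by omega) (by omega) (hagm h2)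
        (by rw [e]; exact hag) hval' hB (by rw [e]; exact hv)
      rwa [e] at hres
    · rintro ⟨hB, hv⟩
      refine ⟨hB, ?_⟩
      have hres := between_local_r hsto (m := κ-1) (by omega) (by omega) (hagm h2).symm
        (by rw [e]; exact hag.symm) hval hB (by rw [e]; exact hv)
      rwa [e] at hres
  show (Vle party succ k κ ∩ votesFor succ k nom κ).ncard =
    (Vle party succ k κ ∩ votesFor succ k nom' κ).ncard
  rw [Vle_inter hne hsto hκ1 hκk hval, Vle_inter hne hsto hκ1 hκk hval', hBeq]

lemma Vge_votesFrom_eq (hne : ∀ i ∈ Finset.Icc 1 k, ∃ c : C, party c = i)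
    (hsto : ∀ v : V, IsStrictTotalOrder C (succ v))
    {κ : ℕ} (hκ1 : 1 ≤ κ) (hκk : κ ≤ k)
    {nom nom' : ℕ → C} (hval : ValidNom party k nom) (hval' : ValidNom party k nom')
    (hagp : κ + 1 ≤ k → nom (κ+1) = nom' (κ+1)) (hag : nom κ = nom' κ) :
    votesFrom (Vge party succ k κ) succ k nom κ =
      votesFrom (Vge party succ k κ) succ k nom' κ := by
  have hk : 1 ≤ k := le_trans hκ1 hκk
  have hBeq : BetweenFor party succ k κ ∩ votesFor succ k nom κ =
      BetweenFor party succ k κ ∩ votesFor succ k nom' κ := by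
    rcases Nat.lt_or_ge κ k with h2 | h2
    swap
    · have : κ = k := by omega
      subst this
      rw [Bk_empty hne hsto hk, Set.empty_inter, Set.empty_inter]
    ext v
    constructor
    · rintro ⟨hB, hv⟩
      exact ⟨hB, between_local_l hsto (m := κ) hκ1 (by omega) hag (hagp (by omega))
        hval' hB hv⟩
    · rintro ⟨hB, hv⟩
      exact ⟨hB, between_local_l hsto (m := κ) hκ1 (by omega) hag.symm
        ((hagp (by omega)).symm) hval hB hv⟩
  show (Vge party succ k κ ∩ votesFor succ k nom κ).ncard =
    (Vge party succ k κ ∩ votesFor succ k nom' κ).ncard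
  rw [Vge_inter hne hsto hκ1 hκk hval, Vge_inter hne hsto hκ1 hκk hval', hBeq]

end AuxPW

/-- A candidate `cκ` of the distinguished party `P_κ` is a Plurality winner with
score `s*` in the reduced election of some nomination scheme iff there are
non-negative integers `s_l`, `s_r` with `s_l + s_r − |V^{P_κ}| = s*` such that
`s_l` is a left-PP-viable and `s_r` a right-PP-viable score for `cκ`. -/
theorem possible_winner_iff_PPviable_scores
    {C V : Type*} [Fintype C] [Fintype V] {k : ℕ}
    (party : C → ℕ) (hpr : ∀ c : C, party c ∈ Finset.Icc 1 k)
    (hne : ∀ i ∈ Finset.Icc 1 k, ∃ c : C, party c = i)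
    (succ : V → C → C → Prop) (hsto : ∀ v : V, IsStrictTotalOrder C (succ v))
    (hPASP : ∀ v : V, PASPVote party (succ v))
    (κ : ℕ) (hκ : κ ∈ Finset.Icc 1 k) (sstar : ℕ)
    (cκ : C) (hcκ : party cκ = κ) :
    (∃ nom : ℕ → C, ValidNom party k nom ∧ nom κ = cκ ∧
      IsWinner succ k nom κ ∧ score succ k nom κ = sstar) ↔
    (∃ sl sr : ℕ, sl + sr = sstar + (AlwaysFor party succ k κ).ncard ∧
      LeftPPViableScore party succ k sstar κ cκ sl ∧
      RightPPViableScore party succ k sstar κ cκ sr) := by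
  simp only [Finset.mem_Icc] at hκ
  obtain ⟨hκ1, hκk⟩ := hκ
  have hk : 1 ≤ k := le_trans hκ1 hκk
  constructor
  · rintro ⟨nom, hval, hnomκ, hwin, hscore⟩
    refine ⟨votesFrom (Vle party succ k κ) succ k nom κ,
           votesFrom (Vge party succ k κ) succ k nom κ, ?_, ?_, ?_⟩
    · have hcount := count_key hne hsto hPASP hκ1 hκk hval
      omega
    · refine ⟨nom, ⟨fun j hj => hval j (by simp only [Finset.mem_Icc] at hj ⊢; omega), ?_⟩,
        hnomκ, ?_⟩
      · intro nom' hval' hext j hj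
        simp only [Finset.mem_Icc] at hj
        have hsub := votesFor_eq_left hne hsto hPASP hκ1 hκk hval hval'
          (fun l hl => (hext l hl).symm) hj.1 (by omega)
        have hle1 : votesFrom (Vle party succ k κ) succ k nom' j ≤ score succ k nom' j :=
          Set.ncard_le_ncard Set.inter_subset_right (Set.toFinite _)
        have hle2 : score succ k nom' j = score succ k nom j := by
          show (votesFor succ k nom' j).ncard = (votesFor succ k nom j).ncard
          rw [hsub]
        have hle3 : score succ k nom j ≤ score succ k nom κ :=
          hwin j (by simp only [Finset.mem_Icc]; omega)
        omega
      · intro nom' hval' hext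
        exact Vle_votesFrom_eq hne hsto hκ1 hκk hval' hval
          (fun h2 => hext (κ-1) (by simp only [Finset.mem_Icc]; omega))
          (hext κ (by simp only [Finset.mem_Icc]; omega))
    · refine ⟨nom, ⟨fun j hj => hval j (by simp only [Finset.mem_Icc] at hj ⊢; omega), ?_⟩,
        hnomκ, ?_⟩
      · intro nom' hval' hext j hj
        simp only [Finset.mem_Icc] at hj
        have hsub := votesFor_eq_right hne hsto hPASP hκ1 hκk hval hval'
          (fun l hl => (hext l hl).symm) hj.1 hj.2
        have hle1 : votesFrom (Vge party succ k κ) succ k nom' j ≤ score succ k nom' j :=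
          Set.ncard_le_ncard Set.inter_subset_right (Set.toFinite _)
        have hle2 : score succ k nom' j = score succ k nom j := by
          show (votesFor succ k nom' j).ncard = (votesFor succ k nom j).ncard
          rw [hsub]
        have hle3 : score succ k nom j ≤ score succ k nom κ :=
          hwin j (by simp only [Finset.mem_Icc]; omega)
        omega
      · intro nom' hval' hext
        exact Vge_votesFrom_eq hne hsto hκ1 hκk hval' hval
          (fun h2 => hext (κ+1) (by simp only [Finset.mem_Icc]; omega))
          (hext κ (by simp only [Finset.mem_Icc]; omega))
  · rintro ⟨sl, sr, hsum, ⟨csl, hLf, hcsl, hLs⟩, ⟨csr, hRf, hcsr, hRs⟩⟩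
    classical
    set nomc : ℕ → C := fun j => if j ≤ κ then csl j else csr j with hnomc
    have hvalc : ValidNom party k nomc := by
      intro i hi
      simp only [Finset.mem_Icc] at hi
      by_cases h : i ≤ κ
      · simp only [hnomc, if_pos h]
        exact hLf.1 i (by simp only [Finset.mem_Icc]; omega)
      · simp only [hnomc, if_neg h]
        exact hRf.1 i (by simp only [Finset.mem_Icc]; omega)
    have hextL : Extends κ csl nomc := by
      intro j hj
      simp only [Finset.mem_Icc] at hj
      simp only [hnomc, if_pos hj.2]
    have hextR : ExtendsR κ k csr nomc := by
      intro j hj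
      simp only [Finset.mem_Icc] at hj
      by_cases h : j ≤ κ
      · have hjκ : j = κ := le_antisymm h hj.1
        subst hjκ
        simp only [hnomc, if_pos le_rfl]
        rw [hcsl, ← hcsr]
      · simp only [hnomc, if_neg h]
    have hnomcκ : nomc κ = cκ := by
      simp only [hnomc, if_pos le_rfl]
      exact hcsl
    have hsl : votesFrom (Vle party succ k κ) succ k nomc κ = sl := hLs nomc hvalc hextL
    have hsr : votesFrom (Vge party succ k κ) succ k nomc κ = sr := hRs nomc hvalc hextR
    have hcount := count_key hne hsto hPASP hκ1 hκk hvalc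
    have hscoreκ : score succ k nomc κ = sstar := by omega
    refine ⟨nomc, hvalc, hnomcκ, ?_, hscoreκ⟩
    intro j hj
    simp only [Finset.mem_Icc] at hj
    rcases Nat.lt_trichotomy j κ with hlt | rfl | hgt
    · have hsub := votesFor_subset_Vle hne hsto hPASP hκ1 hκk hvalc hj.1 (by omega)
      have hscj : score succ k nomc j = votesFrom (Vle party succ k κ) succ k nomc j := by
        show (votesFor succ k nomc j).ncard = (Vle party succ k κ ∩ votesFor succ k nomc j).ncard
        rw [Set.inter_eq_self_of_subset_right hsub]
      rw [hscoreκ, hscj]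
      exact hLf.2 nomc hvalc hextL j (by simp only [Finset.mem_Icc]; omega)
    · exact le_rfl
    · have hsub := votesFor_subset_Vge hne hsto hPASP hκ1 hκk hvalc (by omega) hj.2
      have hscj : score succ k nomc j = votesFrom (Vge party succ k κ) succ k nomc j := by
        show (votesFor succ k nomc j).ncard = (Vge party succ k κ ∩ votesFor succ k nomc j).ncard
        rw [Set.inter_eq_self_of_subset_right hsub]
      rw [hscoreκ, hscj]
      exact hRf.2 nomc hvalc hextR j (by simp only [Finset.mem_Icc]; omega)
end
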